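/- arXiv:1305.4324 — 7 statements merged into one kernel-verified Lean document; each statement's English description precedes it below -/
import Mathlib

section
/- Let I ⊆ ℝ be an open interval and let σ : I → (0,∞) be twice differentiable with (σ′(μ))² + 3·σ(μ)·σ″(μ) = 0 for all μ ∈ I. Then there exist real constants k and ℓ such that σ(μ)^{4/3} = kμ + ℓ for all μ ∈ I; equivalently, the variance function V = σ² satisfies V(μ) = (kμ + ℓ)^{3/2} on I. -/
open Real

/-- helper: a function with derivative 0 on a convex set is constant there. -/
lemma const_of_deriv_zero_on {s : Set ℝ} (hs : Convex ℝ s) {f : ℝ → ℝ}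
    (hf : ∀ x ∈ s, HasDerivAt f 0 x) {x y : ℝ} (hx : x ∈ s) (hy : y ∈ s) :
    f y = f x := by
  have := hs.norm_image_sub_le_of_norm_hasDerivWithin_le (C := 0)
    (f' := fun _ => (0:ℝ)) (fun z hz => (hf z hz).hasDerivWithinAt)
    (fun z hz => by simp) hx hy
  rw [zero_mul] at this
  have h0 : f y - f x = 0 := by
    simpa using le_antisymm this (norm_nonneg _)
  linarith

/-- If `σ : I → (0,∞)` is twice differentiable on an open interval `I`
and satisfies `(σ′)² + 3σσ″ = 0` on `I`, then `σ^{4/3}` is affine on `I`: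
`σ(μ)^{4/3} = kμ + ℓ`, equivalently the variance `V = σ²` satisfies
`V(μ) = (kμ + ℓ)^{3/2}` on `I`. -/
theorem sigma_ode_zero_case
    (I : Set ℝ) (hIopen : IsOpen I) (hIconv : Convex ℝ I)
    (σ : ℝ → ℝ) (hσpos : ∀ μ ∈ I, 0 < σ μ)
    (hσdiff : ∀ μ ∈ I, DifferentiableAt ℝ σ μ)
    (hσdiff2 : ∀ μ ∈ I, DifferentiableAt ℝ (deriv σ) μ)
    (hODE : ∀ μ ∈ I, (deriv σ μ) ^ 2 + 3 * σ μ * deriv (deriv σ) μ = 0) :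
    ∃ k ℓ : ℝ, ∀ μ ∈ I,
      σ μ ^ ((4 : ℝ) / 3) = k * μ + ℓ ∧ σ μ ^ 2 = (k * μ + ℓ) ^ ((3 : ℝ) / 2) := by
  rcases Set.eq_empty_or_nonempty I with hI | ⟨μ₀, hμ₀⟩
  · exact ⟨0, 0, by simp [hI]⟩
  set g : ℝ → ℝ := fun μ => σ μ ^ ((4 : ℝ) / 3) with hg
  set h : ℝ → ℝ := fun μ => deriv σ μ * ((4 : ℝ)/3) * σ μ ^ ((4 : ℝ)/3 - 1) with hh
  have hg' : ∀ μ ∈ I, HasDerivAt g (h μ) μ := fun μ hμ =>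
    ((hσdiff μ hμ).hasDerivAt).rpow_const (Or.inl (hσpos μ hμ).ne')
  -- h has derivative 0 on I
  have hh' : ∀ μ ∈ I, HasDerivAt h 0 μ := by
    intro μ hμ
    have hσne := (hσpos μ hμ).ne'
    have h1 : HasDerivAt (fun x => σ x ^ ((4:ℝ)/3 - 1))
        (deriv σ μ * ((4:ℝ)/3 - 1) * σ μ ^ ((4:ℝ)/3 - 1 - 1)) μ :=
      ((hσdiff μ hμ).hasDerivAt).rpow_const (Or.inl hσne)
    have h2 : HasDerivAt (fun x => deriv σ x * ((4:ℝ)/3))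
        (deriv (deriv σ) μ * ((4:ℝ)/3)) μ := ((hσdiff2 μ hμ).hasDerivAt).mul_const _
    have h3 : HasDerivAt (fun x => deriv σ x * ((4:ℝ)/3) * σ x ^ ((4:ℝ)/3 - 1))
        (deriv (deriv σ) μ * ((4:ℝ)/3) * σ μ ^ ((4:ℝ)/3 - 1) +
          deriv σ μ * ((4:ℝ)/3) * (deriv σ μ * ((4:ℝ)/3 - 1) * σ μ ^ ((4:ℝ)/3 - 1 - 1))) μ :=
      h2.mul h1
    convert h3 using 1
    have hode := hODE μ hμ
    have key : σ μ ^ ((4:ℝ)/3 - 1) = σ μ * σ μ ^ ((4:ℝ)/3 - 1 - 1) := by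
      rw [show (4:ℝ)/3 - 1 = 1 + ((4:ℝ)/3 - 1 - 1) by ring,
        Real.rpow_add (hσpos μ hμ), Real.rpow_one]
      norm_num
    rw [key]
    linear_combination (-(4:ℝ)/9 * σ μ ^ ((4:ℝ)/3 - 1 - 1)) * hode
  -- so h is constant k on I, and g μ - k μ is constant ℓ
  set k := h μ₀ with hk
  have hhk : ∀ μ ∈ I, h μ = k := fun μ hμ => const_of_deriv_zero_on hIconv hh' hμ₀ hμ
  have hgk : ∀ μ ∈ I, HasDerivAt (fun x => g x - k * x) 0 μ := by
    intro μ hμ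
    have := (hg' μ hμ).sub ((hasDerivAt_id μ).const_mul k)
    rw [hhk μ hμ] at this
    rw [mul_one, sub_self] at this; exact this
  set ℓ := g μ₀ - k * μ₀ with hℓ
  refine ⟨k, ℓ, fun μ hμ => ?_⟩
  have haff : g μ = k * μ + ℓ := by
    have := const_of_deriv_zero_on hIconv hgk hμ₀ hμ
    linarith
  refine ⟨haff, ?_⟩
  have hpos := hσpos μ hμ
  have h2 : σ μ ^ 2 = σ μ ^ ((2:ℝ)) := by
    rw [← Real.rpow_natCast]; norm_num
  rw [h2, ← haff]
  show σ μ ^ (2:ℝ) = (σ μ ^ ((4:ℝ)/3)) ^ ((3:ℝ)/2)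
  rw [← Real.rpow_mul hpos.le]
  norm_num
end

section
/- Fix k > 0 and an integer n ≥ 1, and define D(μ₀, μ) = k·(log(μ/μ₀) + μ₀/μ − 1) for μ₀, μ > 0. Then the function μ₀ ↦ ∫_0^∞ exp(−n·D(μ₀, μ)) · (√k/μ) dμ is constant on (0,∞). -/
open MeasureTheory Real Set

lemma gamma_snml_aux (k : ℝ) (n : ℕ) (D : ℝ → ℝ → ℝ)
    (hD : ∀ μ₀ μ, D μ₀ μ = k * (Real.log (μ / μ₀) + μ₀ / μ - 1))
    {c : ℝ} (hc : 0 < c) :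
    (∫ μ in Set.Ioi (0 : ℝ), Real.exp (-(n : ℝ) * D c μ) * (Real.sqrt k / μ)) =
      ∫ x in Set.Ioi (0 : ℝ),
        Real.exp (-(n : ℝ) * (k * (Real.log x + 1 / x - 1))) * (Real.sqrt k / x) := by
  set h : ℝ → ℝ := fun x =>
    Real.exp (-(n : ℝ) * (k * (Real.log x + 1 / x - 1))) * (Real.sqrt k / x) with hh
  have key : ∀ μ ∈ Set.Ioi (0 : ℝ),
      Real.exp (-(n : ℝ) * D c μ) * (Real.sqrt k / μ) = c⁻¹ • h (c⁻¹ * μ) := by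
    intro μ hμ
    simp only [Set.mem_Ioi] at hμ
    rw [hD, hh]
    have h1 : c⁻¹ * μ = μ / c := by ring
    have h2 : c / μ = 1 / (μ / c) := by field_simp
    simp only [h1, smul_eq_mul, h2]
    field_simp
  rw [setIntegral_congr_fun (by measurability) key]
  rw [integral_smul, integral_comp_mul_left_Ioi h 0 (inv_pos.mpr hc), mul_zero]
  rw [smul_smul, inv_inv, inv_mul_cancel₀ hc.ne', one_smul]

/-- For fixed `k > 0` and integer `n ≥ 1`, with
`D(μ₀, μ) = k(log(μ/μ₀) + μ₀/μ − 1)`, the function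
`μ₀ ↦ ∫_0^∞ exp(−n·D(μ₀, μ))·(√k/μ) dμ` is constant on `(0,∞)`. -/
theorem gamma_snml_integral_constant (k : ℝ) (hk : 0 < k) (n : ℕ) (hn : 1 ≤ n)
    (D : ℝ → ℝ → ℝ)
    (hD : ∀ μ₀ μ, D μ₀ μ = k * (Real.log (μ / μ₀) + μ₀ / μ - 1)) :
    ∀ μ₀ μ₁ : ℝ, 0 < μ₀ → 0 < μ₁ →
      (∫ μ in Set.Ioi (0 : ℝ), Real.exp (-(n : ℝ) * D μ₀ μ) * (Real.sqrt k / μ)) =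
        ∫ μ in Set.Ioi (0 : ℝ), Real.exp (-(n : ℝ) * D μ₁ μ) * (Real.sqrt k / μ) := by
  intro μ₀ μ₁ h0 h1
  rw [gamma_snml_aux k n D hD h0, gamma_snml_aux k n D hD h1]
end

section
/- Fix an integer n ≥ 1. The function μ₀ ↦ ∫_0^∞ exp(−n·(√μ − √μ₀)²/√μ) · μ^{−3/4} dμ is constant on (0,∞), with constant value 2√π/√n. -/
open MeasureTheory Real Set

lemma aux_sub_div_image (a : ℝ) (ha : 0 < a) :
    (fun u : ℝ => u - a / u) '' Set.Ioi 0 = Set.univ := by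
  apply Set.eq_univ_of_forall
  intro v
  have h4a : (0:ℝ) < v^2 + 4*a := by positivity
  set s := Real.sqrt (v^2 + 4*a) with hs
  have hs2 : s^2 = v^2 + 4*a := Real.sq_sqrt h4a.le
  have hsnn : 0 ≤ s := Real.sqrt_nonneg _
  have hsv : |v| < s := by nlinarith [sq_abs v, abs_nonneg v]
  have hu : 0 < (v + s)/2 := by
    have := neg_abs_le v
    linarith
  refine ⟨(v+s)/2, hu, ?_⟩
  have hne : (v+s)/2 ≠ 0 := ne_of_gt hu
  simp only
  have h1 : a / ((v+s)/2) = (s - v)/2 := by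
    rw [div_eq_iff hne]; nlinarith [hs2]
  rw [h1]; ring

lemma aux_strictmono (a : ℝ) (ha : 0 < a) :
    StrictMonoOn (fun u : ℝ => u - a / u) (Set.Ioi 0) := by
  intro u hu v hv huv
  simp only
  have : a / v < a / u := div_lt_div_of_pos_left ha hu huv
  linarith

lemma aux_deriv (a : ℝ) (ha : 0 < a) :
    ∀ u ∈ Set.Ioi (0:ℝ), HasDerivWithinAt (fun u : ℝ => u - a / u)
      (1 + a / u ^ 2) (Set.Ioi 0) u := by
  intro u hu
  have hu0 : u ≠ 0 := ne_of_gt hu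
  have h : HasDerivAt (fun u : ℝ => u - a / u) (1 - a * (-(u^2)⁻¹)) u := by
    simpa [div_eq_mul_inv] using
      (hasDerivAt_id' u).fun_sub (((hasDerivAt_inv hu0)).const_mul a)
  have : 1 - a * (-(u^2)⁻¹) = 1 + a / u ^ 2 := by field_simp; ring
  exact (this ▸ h).hasDerivWithinAt

lemma aux_key (n : ℕ) (hn : 1 ≤ n) (a : ℝ) (ha : 0 < a) :
    ∫ u in Set.Ioi (0:ℝ), Real.exp (-(n:ℝ) * (u - a/u)^2)
      = Real.sqrt (Real.pi / n) / 2 := by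
  have hnpos : (0:ℝ) < n := by exact_mod_cast hn
  set gauss : ℝ → ℝ := fun v => Real.exp (-(n:ℝ) * v^2) with hgauss
  have hinj : InjOn (fun u : ℝ => u - a / u) (Set.Ioi 0) :=
    (aux_strictmono a ha).injOn
  have hcov := integral_image_eq_integral_abs_deriv_smul measurableSet_Ioi
      (aux_deriv a ha) hinj gauss
  rw [aux_sub_div_image a ha, setIntegral_univ] at hcov
  have hint : Integrable gauss := integrable_exp_neg_mul_sq hnpos
  have habs : ∀ u ∈ Set.Ioi (0:ℝ), |1 + a / u ^ 2| = 1 + a / u ^ 2 := by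
    intro u hu
    rw [abs_of_pos]
    have : (0:ℝ) < u := hu
    positivity
  have hL : IntegrableOn (fun u : ℝ => |1 + a / u ^ 2| • gauss (u - a/u)) (Set.Ioi 0) := by
    rw [← integrableOn_image_iff_integrableOn_abs_deriv_smul measurableSet_Ioi
      (aux_deriv a ha) hinj gauss, aux_sub_div_image a ha]
    exact hint.integrableOn
  have hL' : IntegrableOn (fun u : ℝ => (1 + a / u ^ 2) * gauss (u - a/u)) (Set.Ioi 0) := by
    apply hL.congr_fun _ measurableSet_Ioi
    intro u hu
    simp only [smul_eq_mul]
    rw [habs u hu]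
  have hG : IntegrableOn (fun u : ℝ => gauss (u - a/u)) (Set.Ioi 0) := by
    refine Integrable.mono hL' ?_ ?_
    · exact Measurable.aestronglyMeasurable (by fun_prop)
    · filter_upwards [ae_restrict_mem measurableSet_Ioi] with u hu
      have h0 : (0:ℝ) < u := hu
      have h1 : (0:ℝ) < 1 + a / u^2 := by positivity
      have h2 : 0 < gauss (u - a/u) := Real.exp_pos _
      rw [Real.norm_eq_abs, Real.norm_eq_abs, abs_of_pos h2, abs_of_pos (by positivity)]
      nlinarith [mul_pos (div_pos ha (pow_pos h0 2)) h2]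
  have hK : IntegrableOn (fun u : ℝ => (a / u ^ 2) * gauss (u - a/u)) (Set.Ioi 0) := by
    apply IntegrableOn.congr_fun (hL'.sub hG) _ measurableSet_Ioi
    intro u hu
    simp only [Pi.sub_apply]
    ring
  have hanti : StrictAntiOn (fun u : ℝ => a / u) (Set.Ioi 0) := by
    intro u hu v hv huv
    exact div_lt_div_of_pos_left ha hu huv
  have hderiv2 : ∀ u ∈ Set.Ioi (0:ℝ), HasDerivWithinAt (fun u : ℝ => a / u)
      (-(a / u ^ 2)) (Set.Ioi 0) u := by
    intro u hu
    have hu0 : u ≠ 0 := ne_of_gt hu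
    have h : HasDerivAt (fun u : ℝ => a / u) (a * (-(u^2)⁻¹)) u := by
      simpa [div_eq_mul_inv] using ((hasDerivAt_inv hu0)).const_mul a
    have : a * (-(u^2)⁻¹) = -(a / u ^ 2) := by field_simp
    exact (this ▸ h).hasDerivWithinAt
  have himg2 : (fun u : ℝ => a / u) '' Set.Ioi 0 = Set.Ioi 0 := by
    apply Set.eq_of_subset_of_subset
    · rintro x ⟨u, hu, rfl⟩
      exact div_pos ha hu
    · intro x hx
      exact ⟨a / x, div_pos ha hx, by field_simp⟩
  have hGK : (∫ u in Set.Ioi (0:ℝ), gauss (u - a/u))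
      = ∫ u in Set.Ioi (0:ℝ), (a / u ^ 2) * gauss (u - a/u) := by
    have hcov2 := integral_image_eq_integral_abs_deriv_smul measurableSet_Ioi
        hderiv2 hanti.injOn (fun u => gauss (u - a/u))
    rw [himg2] at hcov2
    rw [hcov2]
    apply setIntegral_congr_fun measurableSet_Ioi
    intro u hu
    have hu0 : u ≠ 0 := ne_of_gt hu
    have h0 : (0:ℝ) < u := hu
    simp only [smul_eq_mul]
    have h2 : a / (a / u) = u := by field_simp
    rw [h2, abs_neg, abs_of_pos (by positivity)]
    congr 1
    simp only [hgauss]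
    congr 1
    ring
  have hsplit : (∫ u in Set.Ioi (0:ℝ), (1 + a / u ^ 2) * gauss (u - a/u))
      = (∫ u in Set.Ioi (0:ℝ), gauss (u - a/u))
        + ∫ u in Set.Ioi (0:ℝ), (a / u ^ 2) * gauss (u - a/u) := by
    rw [← integral_add hG hK]
    apply setIntegral_congr_fun measurableSet_Ioi
    intro u hu
    ring
  have hgaussint : (∫ v : ℝ, gauss v) = Real.sqrt (Real.pi / n) := integral_gaussian n
  have habs_int : (∫ u in Set.Ioi (0:ℝ), |1 + a / u ^ 2| • gauss (u - a/u))
      = ∫ u in Set.Ioi (0:ℝ), (1 + a / u ^ 2) * gauss (u - a/u) := by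
    apply setIntegral_congr_fun measurableSet_Ioi
    intro u hu
    simp only [smul_eq_mul]
    rw [habs u hu]
  rw [habs_int, hsplit, ← hGK, hgaussint] at hcov
  have hEq : (∫ u in Set.Ioi (0:ℝ), Real.exp (-(n:ℝ) * (u - a/u)^2))
      = ∫ u in Set.Ioi (0:ℝ), gauss (u - a/u) := rfl
  rw [hEq]
  linarith

/-- For an integer `n ≥ 1`, the function
`μ₀ ↦ ∫_0^∞ exp(−n(√μ − √μ₀)²/√μ)·μ^{−3/4} dμ` is constant on `(0,∞)`, with value
`2√π/√n`. -/
theorem tweedie_snml_integral_constant (n : ℕ) (hn : 1 ≤ n) :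
    ∀ μ₀ : ℝ, 0 < μ₀ →
      (∫ μ in Set.Ioi (0 : ℝ),
          Real.exp (-(n : ℝ) * (Real.sqrt μ - Real.sqrt μ₀) ^ 2 / Real.sqrt μ) *
            μ ^ (-(3 : ℝ) / 4)) =
        2 * Real.sqrt Real.pi / Real.sqrt n := by
  intro μ₀ hμ₀
  set a := Real.sqrt μ₀ with haa
  have ha : 0 < a := Real.sqrt_pos.mpr hμ₀
  set F : ℝ → ℝ := fun μ =>
    Real.exp (-(n:ℝ) * (Real.sqrt μ - a)^2 / Real.sqrt μ) * μ ^ (-(3:ℝ)/4) with hF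
  have hderiv : ∀ u ∈ Set.Ioi (0:ℝ),
      HasDerivWithinAt (fun u : ℝ => u ^ 4) (4 * u ^ 3) (Set.Ioi 0) u := by
    intro u hu
    have := (hasDerivAt_pow 4 u).hasDerivWithinAt (s := Set.Ioi (0:ℝ))
    simpa using this
  have hmono : StrictMonoOn (fun u : ℝ => u ^ 4) (Set.Ioi 0) := by
    intro u hu v hv huv
    exact pow_lt_pow_left₀ huv (le_of_lt hu) (by norm_num)
  have himg : (fun u : ℝ => u ^ 4) '' Set.Ioi 0 = Set.Ioi 0 := by
    apply Set.eq_of_subset_of_subset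
    · rintro x ⟨u, hu, rfl⟩
      exact pow_pos (Set.mem_Ioi.mp hu) 4
    · intro μ hμ
      refine ⟨μ ^ ((1:ℝ)/4), Real.rpow_pos_of_pos hμ _, ?_⟩
      show (μ ^ ((1:ℝ)/4)) ^ (4:ℕ) = μ
      rw [← Real.rpow_natCast (μ ^ ((1:ℝ)/4)) 4, ← Real.rpow_mul (le_of_lt hμ)]
      norm_num
  have hcov := integral_image_eq_integral_abs_deriv_smul measurableSet_Ioi
      hderiv hmono.injOn F
  rw [himg] at hcov
  have hpt : ∀ u ∈ Set.Ioi (0:ℝ),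
      |4 * u ^ 3| • F (u ^ 4) = 4 * Real.exp (-(n:ℝ) * (u - a/u)^2) := by
    intro u hu
    have hu0 : (0:ℝ) < u := hu
    have hsq : Real.sqrt (u ^ 4) = u ^ 2 := by
      rw [show u^4 = (u^2)^2 by ring, Real.sqrt_sq (by positivity)]
    have hrpow : (u ^ 4 : ℝ) ^ (-(3:ℝ)/4) = (u ^ 3)⁻¹ := by
      rw [← Real.rpow_natCast u 4, ← Real.rpow_mul hu0.le]
      norm_num
    have hexp : -(n:ℝ) * (u^2 - a)^2 / u^2 = -(n:ℝ) * (u - a/u)^2 := by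
      have h3 : (u^2 - a)^2 / u^2 = (u - a/u)^2 := by
        rw [div_eq_iff (by positivity : (u:ℝ)^2 ≠ 0)]
        field_simp
      rw [mul_div_assoc, h3]
    simp only [hF, smul_eq_mul, hsq, hrpow, hexp]
    rw [abs_of_pos (by positivity)]
    field_simp
  have h2 : (∫ u in Set.Ioi (0:ℝ), |4 * u ^ 3| • F (u ^ 4))
      = ∫ u in Set.Ioi (0:ℝ), 4 * Real.exp (-(n:ℝ) * (u - a/u)^2) :=
    setIntegral_congr_fun measurableSet_Ioi hpt
  have hgoal : (∫ μ in Set.Ioi (0:ℝ), F μ) = 2 * Real.sqrt Real.pi / Real.sqrt n := by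
    rw [hcov, h2, integral_const_mul, aux_key n hn a ha,
      Real.sqrt_div Real.pi_pos.le]
    ring
  exact hgoal
end

section
/- For every real number b ≥ 0, ∫_0^∞ exp(−(t² − b)²/t²) dt = √π/2. In particular this integral does not depend on b. -/
open MeasureTheory Real

/-- For every real `b ≥ 0`,
`∫_0^∞ exp(−(t² − b)²/t²) dt = √π/2`; in particular the integral does not depend
on `b`. -/
theorem glasser_type_integral (b : ℝ) (hb : 0 ≤ b) :
    (∫ t in Set.Ioi (0 : ℝ), Real.exp (-((t ^ 2 - b) ^ 2 / t ^ 2))) =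
      Real.sqrt Real.pi / 2 := by
  rcases hb.eq_or_lt with h0 | hb
  · -- case b = 0
    have hcg : Set.EqOn (fun t : ℝ => Real.exp (-((t ^ 2 - b) ^ 2 / t ^ 2)))
        (fun t : ℝ => Real.exp (-1 * t ^ 2)) (Set.Ioi 0) := by
      intro t ht
      have ht' : t ≠ 0 := ne_of_gt (Set.mem_Ioi.1 ht)
      rw [← h0]
      simp only [sub_zero, neg_one_mul]
      congr 1
      rw [neg_inj]
      field_simp
    rw [setIntegral_congr_fun measurableSet_Ioi hcg, integral_gaussian_Ioi]
    norm_num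
  · -- case 0 < b
    set g : ℝ → ℝ := fun t => Real.exp (-((t ^ 2 - b) ^ 2 / t ^ 2)) with hgdef
    set φ : ℝ → ℝ := fun t => t - b / t with hφdef
    have hgφ : ∀ t ∈ Set.Ioi (0:ℝ), Real.exp (-(φ t) ^ 2) = g t := by
      intro t ht
      have ht' : t ≠ 0 := ne_of_gt (Set.mem_Ioi.1 ht)
      simp only [hφdef, hgdef]
      congr 1
      field_simp
    have hmg : Measurable g := by
      apply Real.measurable_exp.comp
      exact (((measurable_id.pow_const 2).sub_const b).pow_const 2).div
        (measurable_id.pow_const 2) |>.neg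
    -- derivative of ψ = b / t
    have hψ' : ∀ t ∈ Set.Ioi (0:ℝ),
        HasDerivWithinAt (fun t : ℝ => b / t) (-(b / t ^ 2)) (Set.Ioi 0) t := by
      intro t ht
      have : HasDerivAt (fun t : ℝ => b / t) (-(b / t ^ 2)) t := by
        simpa [div_eq_mul_inv, mul_comm, neg_div] using
          ((hasDerivAt_inv (ne_of_gt (Set.mem_Ioi.1 ht))).const_mul b)
      exact this.hasDerivWithinAt
    have hψinj : Set.InjOn (fun t : ℝ => b / t) (Set.Ioi 0) := by
      intro s hs t ht h
      have hs' : (s:ℝ) ≠ 0 := ne_of_gt (Set.mem_Ioi.1 hs)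
      have ht' : (t:ℝ) ≠ 0 := ne_of_gt (Set.mem_Ioi.1 ht)
      field_simp at h
      exact h.symm
    have hψim : (fun t : ℝ => b / t) '' Set.Ioi 0 = Set.Ioi 0 := by
      ext y
      constructor
      · rintro ⟨t, ht, rfl⟩; exact div_pos hb (Set.mem_Ioi.1 ht)
      · intro hy
        exact ⟨b / y, div_pos hb (Set.mem_Ioi.1 hy), by field_simp⟩
    -- step A: reflection t ↦ b / t
    have hA : (∫ t in Set.Ioi (0:ℝ), g t) = ∫ t in Set.Ioi (0:ℝ), (b / t ^ 2) * g t := by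
      have h1 := integral_image_eq_integral_abs_deriv_smul measurableSet_Ioi hψ' hψinj g
      rw [hψim] at h1
      rw [h1]
      apply setIntegral_congr_fun measurableSet_Ioi
      intro t ht
      have ht0 : (0:ℝ) < t := Set.mem_Ioi.1 ht
      have ht' : t ≠ 0 := ne_of_gt ht0
      have habs : |(-(b / t ^ 2))| = b / t ^ 2 := by
        rw [abs_neg, abs_of_pos (by positivity)]
      have hsymm : g (b / t) = g t := by
        simp only [hgdef]
        congr 1
        rw [neg_inj]
        rw [div_eq_div_iff (by positivity) (by positivity)]
        field_simp
        ring
      simp only [smul_eq_mul, habs, hsymm]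
    -- derivative of φ
    have hφ' : ∀ t ∈ Set.Ioi (0:ℝ),
        HasDerivWithinAt φ (1 + b / t ^ 2) (Set.Ioi 0) t := by
      intro t ht
      have h1 : HasDerivAt (fun t : ℝ => b / t) (-(b / t ^ 2)) t := by
        simpa [div_eq_mul_inv, mul_comm, neg_div] using
          ((hasDerivAt_inv (ne_of_gt (Set.mem_Ioi.1 ht))).const_mul b)
      have := (hasDerivAt_id' t).fun_sub h1
      simpa [hφdef, sub_neg_eq_add] using this.hasDerivWithinAt
    have hφinj : Set.InjOn φ (Set.Ioi 0) := by
      have hmono : StrictMonoOn φ (Set.Ioi 0) := by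
        intro s hs t ht hst
        have hs0 : (0:ℝ) < s := Set.mem_Ioi.1 hs
        have ht0 : (0:ℝ) < t := Set.mem_Ioi.1 ht
        have : b / t < b / s := div_lt_div_of_pos_left hb hs0 hst
        simp only [hφdef]
        linarith
      exact hmono.injOn
    have hφim : φ '' Set.Ioi 0 = Set.univ := by
      ext y
      simp only [Set.mem_univ, iff_true]
      have hnn : (0:ℝ) ≤ y ^ 2 + 4 * b := by nlinarith [sq_nonneg y]
      have hsq : Real.sqrt (y ^ 2 + 4 * b) ^ 2 = y ^ 2 + 4 * b := Real.sq_sqrt hnn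
      have hsy : -y < Real.sqrt (y ^ 2 + 4 * b) := by
        have h1 : |y| < Real.sqrt (y ^ 2 + 4 * b) := by
          rw [← Real.sqrt_sq_eq_abs]
          exact Real.sqrt_lt_sqrt (sq_nonneg y) (by linarith)
        calc -y ≤ |y| := neg_le_abs y
        _ < _ := h1
      have ht : 0 < (y + Real.sqrt (y ^ 2 + 4 * b)) / 2 := by linarith
      refine ⟨(y + Real.sqrt (y ^ 2 + 4 * b)) / 2, ht, ?_⟩
      have h2 : y + Real.sqrt (y ^ 2 + 4 * b) ≠ 0 := by linarith
      simp only [hφdef]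
      field_simp
      nlinarith [hsq]
    -- step B: substitution s = φ t over the whole line
    have hgauss : Integrable (fun x : ℝ => Real.exp (-x ^ 2)) := by
      simpa using integrable_exp_neg_mul_sq (one_pos (α := ℝ))
    have hint : IntegrableOn
        (fun t => |1 + b / t ^ 2| * Real.exp (-(φ t) ^ 2)) (Set.Ioi 0) := by
      have h1 := (integrableOn_image_iff_integrableOn_abs_deriv_smul measurableSet_Ioi
        hφ' hφinj (fun x => Real.exp (-x ^ 2))).mp ?_
      · simpa [smul_eq_mul] using h1
      · rw [hφim]
        exact hgauss.integrableOn
    have hintcongr : Set.EqOn (fun t => |1 + b / t ^ 2| * Real.exp (-(φ t) ^ 2))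
        (fun t => g t + (b / t ^ 2) * g t) (Set.Ioi 0) := by
      intro t ht
      have ht0 : (0:ℝ) < t := Set.mem_Ioi.1 ht
      have habs : |1 + b / t ^ 2| = 1 + b / t ^ 2 := abs_of_pos (by positivity)
      simp only [habs, hgφ t ht]
      ring
    have hint2 : IntegrableOn (fun t => g t + (b / t ^ 2) * g t) (Set.Ioi 0) := by
      exact (integrableOn_congr_fun hintcongr measurableSet_Ioi).mp hint
    have hintg : IntegrableOn g (Set.Ioi 0) := by
      apply hint2.mono' (hmg.aestronglyMeasurable.restrict)
      filter_upwards [ae_restrict_mem measurableSet_Ioi] with t ht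
      have ht0 : (0:ℝ) < t := Set.mem_Ioi.1 ht
      have hgp : 0 < g t := Real.exp_pos _
      have hbp : 0 ≤ (b / t ^ 2) * g t := by positivity
      rw [Real.norm_eq_abs, abs_of_pos hgp]
      linarith
    have hintbg : IntegrableOn (fun t => (b / t ^ 2) * g t) (Set.Ioi 0) := by
      apply hint2.mono' ?_ ?_
      · exact ((measurable_const.div (measurable_id.pow_const 2)).mul hmg).aestronglyMeasurable.restrict
      · filter_upwards [ae_restrict_mem measurableSet_Ioi] with t ht
        have ht0 : (0:ℝ) < t := Set.mem_Ioi.1 ht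
        have hgp : 0 < g t := Real.exp_pos _
        have hbp : 0 ≤ (b / t ^ 2) * g t := by positivity
        rw [Real.norm_eq_abs, abs_of_nonneg hbp]
        linarith
    have hB : Real.sqrt Real.pi =
        ∫ t in Set.Ioi (0:ℝ), |1 + b / t ^ 2| * Real.exp (-(φ t) ^ 2) := by
      have h1 := integral_image_eq_integral_abs_deriv_smul measurableSet_Ioi hφ' hφinj
        (fun x => Real.exp (-x ^ 2))
      rw [hφim] at h1
      have h2 : (∫ x : ℝ, Real.exp (-x ^ 2)) = Real.sqrt Real.pi := by
        simpa using integral_gaussian 1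
      rw [← h2, ← setIntegral_univ (f := fun x : ℝ => Real.exp (-x ^ 2)), h1]
      simp [smul_eq_mul]
    rw [setIntegral_congr_fun measurableSet_Ioi hintcongr] at hB
    rw [integral_add hintg hintbg, ← hA] at hB
    have : (∫ t in Set.Ioi (0:ℝ), g t) = Real.sqrt Real.pi / 2 := by linarith
    exact this
end

section
/- Let a < b be reals, let σ : [a,b] → (0,∞) be continuous, and define D(x, μ) = ∫_x^μ (t − x)/σ(t)² dt for x, μ ∈ [a,b]. Then for every x in the open interval (a,b), lim_{n→∞} √(n/(2π)) · ∫_a^b exp(−n·D(x, μ))/σ(μ) dμ = 1. -/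
open MeasureTheory Real Filter Topology intervalIntegral

/-- Laplace approximation at an interior point: for continuous
`σ : [a,b] → (0,∞)` and `D(x, μ) = ∫_x^μ (t − x)/σ(t)² dt`, for every `x ∈ (a,b)`,
`√(n/(2π)) · ∫_a^b exp(−n·D(x, μ))/σ(μ) dμ → 1` as `n → ∞`. -/
theorem laplace_interior_limit (a b : ℝ) (hab : a < b)
    (σ : ℝ → ℝ) (hσcont : ContinuousOn σ (Set.Icc a b))
    (hσpos : ∀ t ∈ Set.Icc a b, 0 < σ t)
    (D : ℝ → ℝ → ℝ) (hD : ∀ x μ, D x μ = ∫ t in x..μ, (t - x) / (σ t) ^ 2) :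
    ∀ x ∈ Set.Ioo a b,
      Tendsto
        (fun n : ℕ =>
          Real.sqrt (n / (2 * Real.pi)) *
            ∫ μ in a..b, Real.exp (-(n : ℝ) * D x μ) / σ μ)
        atTop (𝓝 1) := by
  intro x hx
  obtain ⟨hax, hxb⟩ := hx
  have hxI : x ∈ Set.Icc a b := ⟨hax.le, hxb.le⟩
  have hs0 : 0 < σ x := hσpos x hxI
  set s : ℝ := σ x with hs_def
  -- min and max of σ on [a,b]
  obtain ⟨t₀, ht₀I, ht₀⟩ := isCompact_Icc.exists_isMinOn ⟨x, hxI⟩ hσcont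
  obtain ⟨t₁, ht₁I, ht₁⟩ := isCompact_Icc.exists_isMaxOn ⟨x, hxI⟩ hσcont
  set m : ℝ := σ t₀ with hm_def
  set M : ℝ := σ t₁ with hM_def
  have hm0 : 0 < m := hσpos t₀ ht₀I
  have hmle : ∀ t ∈ Set.Icc a b, m ≤ σ t := fun t ht => ht₀ ht
  have hMle : ∀ t ∈ Set.Icc a b, σ t ≤ M := fun t ht => ht₁ ht
  have hM0 : 0 < M := lt_of_lt_of_le hm0 (hmle t₁ ht₁I)
  have huIcc : ∀ {μ : ℝ}, μ ∈ Set.Icc a b → Set.uIcc x μ ⊆ Set.Icc a b :=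
    fun {μ} hμ => Set.uIcc_subset_Icc hxI hμ
  have hfc : ContinuousOn (fun t => (t - x) / σ t ^ 2) (Set.Icc a b) :=
    (continuousOn_id.sub continuousOn_const).div (hσcont.pow 2)
      (fun t ht => pow_ne_zero 2 (hσpos t ht).ne')
  have hfint : ∀ μ ∈ Set.Icc a b,
      IntervalIntegrable (fun t => (t - x) / σ t ^ 2) volume x μ :=
    fun μ hμ => (hfc.mono (huIcc hμ)).intervalIntegrable
  -- the quadratic integral
  have hlin : ∀ μ : ℝ, (∫ t in x..μ, (t - x)) = (μ - x) ^ 2 / 2 := by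
    intro μ
    have h := intervalIntegral.integral_comp_sub_right (a := x) (b := μ) (fun t => t) x
    rw [h, integral_id]
    ring
  have hquad : ∀ (c μ : ℝ), (∫ t in x..μ, (t - x) / c) = (μ - x) ^ 2 / (2 * c) := by
    intro c μ
    simp only [div_eq_mul_inv]
    rw [intervalIntegral.integral_mul_const, hlin]
    ring
  have hqint : ∀ c : ℝ, ∀ μ : ℝ, IntervalIntegrable (fun t => (t - x) / c) volume x μ :=
    fun c μ => (Continuous.div_const (continuous_id.sub continuous_const) c).intervalIntegrable x μ
  -- local quadratic approximation of D near x
  have happrox : ∀ ε : ℝ, 0 < ε → ∃ δ : ℝ, 0 < δ ∧ ∀ μ : ℝ, |μ - x| ≤ δ →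
      μ ∈ Set.Icc a b ∧ |D x μ - (μ - x) ^ 2 / (2 * s ^ 2)| ≤ ε * (μ - x) ^ 2 := by
    intro ε hε
    have hσx : ContinuousAt σ x := hσcont.continuousAt (Icc_mem_nhds hax hxb)
    have hG : ContinuousAt (fun t => 1 / σ t ^ 2) x :=
      continuousAt_const.div (hσx.pow 2) (pow_ne_zero 2 hs0.ne')
    obtain ⟨δ₁, hδ₁, hball⟩ := Metric.continuousAt_iff.mp hG ε hε
    refine ⟨min (δ₁ / 2) (min (x - a) (b - x)),
      lt_min (by linarith) (lt_min (by linarith) (by linarith)), fun μ hμ => ?_⟩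
    have hm1 : |μ - x| ≤ x - a := hμ.trans ((min_le_right _ _).trans (min_le_left _ _))
    have hm2 : |μ - x| ≤ b - x := hμ.trans ((min_le_right _ _).trans (min_le_right _ _))
    have hm3 : |μ - x| ≤ δ₁ / 2 := hμ.trans (min_le_left _ _)
    have hμa := abs_le.mp hm1
    have hμb := abs_le.mp hm2
    have hμI : μ ∈ Set.Icc a b := ⟨by linarith [hμa.1], by linarith [hμb.2]⟩
    refine ⟨hμI, ?_⟩
    have key : D x μ - (μ - x) ^ 2 / (2 * s ^ 2)
        = ∫ t in x..μ, ((t - x) / σ t ^ 2 - (t - x) / s ^ 2) := by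
      rw [hD, intervalIntegral.integral_sub (hfint μ hμI) (hqint (s ^ 2) μ), hquad]
    have hb' : ∀ t ∈ Set.uIoc x μ,
        ‖(t - x) / σ t ^ 2 - (t - x) / s ^ 2‖ ≤ ε * |μ - x| := by
      intro t ht
      have htIcc : t ∈ Set.uIcc x μ := Set.Ioc_subset_Icc_self ht
      have htx : |t - x| ≤ |μ - x| := by
        have h1 := le_abs_self (μ - x)
        have h2 := neg_abs_le (μ - x)
        rcases Set.mem_uIcc.mp htIcc with ⟨ha', hb'⟩ | ⟨ha', hb'⟩ <;>
          rw [abs_le] <;> constructor <;> linarith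
      have hdist : dist t x < δ₁ := by
        rw [Real.dist_eq]
        calc |t - x| ≤ |μ - x| := htx
          _ ≤ δ₁ / 2 := hm3
          _ < δ₁ := by linarith
      have hgg := hball hdist
      rw [Real.dist_eq] at hgg
      have heq : (t - x) / σ t ^ 2 - (t - x) / s ^ 2
          = (t - x) * (1 / σ t ^ 2 - 1 / s ^ 2) := by ring
      rw [heq, Real.norm_eq_abs, abs_mul, mul_comm (ε) (|μ - x|)]
      exact mul_le_mul htx hgg.le (abs_nonneg _) (abs_nonneg _)
    have hnorm := intervalIntegral.norm_integral_le_of_norm_le_const hb'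
    rw [key]
    calc |∫ t in x..μ, ((t - x) / σ t ^ 2 - (t - x) / s ^ 2)|
        ≤ ε * |μ - x| * |μ - x| := hnorm
      _ = ε * (μ - x) ^ 2 := by
          rw [mul_assoc, ← abs_mul, show (μ - x) * (μ - x) = (μ - x) ^ 2 by ring,
            abs_of_nonneg (sq_nonneg _)]
  -- global lower bound for D
  have hDlow : ∀ μ ∈ Set.Icc a b, (μ - x) ^ 2 / (2 * M ^ 2) ≤ D x μ := by
    intro μ hμ
    have key : D x μ = (μ - x) ^ 2 / (2 * M ^ 2)
        + ∫ t in x..μ, ((t - x) / σ t ^ 2 - (t - x) / M ^ 2) := by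
      rw [hD, intervalIntegral.integral_sub (hfint μ hμ) (hqint (M ^ 2) μ), hquad]
      ring
    have hfac : ∀ t ∈ Set.Icc a b, 0 ≤ 1 / σ t ^ 2 - 1 / M ^ 2 := by
      intro t ht
      rw [sub_nonneg]
      have h1 := hσpos t ht
      have h2 := hMle t ht
      apply one_div_le_one_div_of_le (by positivity) (by nlinarith)
    rw [key]
    rcases le_total x μ with hxμ | hμx
    · have hnn : 0 ≤ ∫ t in x..μ, ((t - x) / σ t ^ 2 - (t - x) / M ^ 2) := by
        apply intervalIntegral.integral_nonneg hxμ
        intro t ht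
        have htab : t ∈ Set.Icc a b := ⟨le_trans hxI.1 ht.1, le_trans ht.2 hμ.2⟩
        have heq : (t - x) / σ t ^ 2 - (t - x) / M ^ 2
            = (t - x) * (1 / σ t ^ 2 - 1 / M ^ 2) := by ring
        rw [heq]
        exact mul_nonneg (by linarith [ht.1]) (hfac t htab)
      linarith
    · have hsymm : (∫ t in x..μ, ((t - x) / σ t ^ 2 - (t - x) / M ^ 2))
          = -∫ t in μ..x, ((t - x) / σ t ^ 2 - (t - x) / M ^ 2) :=
        intervalIntegral.integral_symm μ x
      have hnn : 0 ≤ ∫ t in μ..x, -((t - x) / σ t ^ 2 - (t - x) / M ^ 2) := by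
        apply intervalIntegral.integral_nonneg hμx
        intro t ht
        have htab : t ∈ Set.Icc a b := ⟨le_trans hμ.1 ht.1, le_trans ht.2 hxI.2⟩
        have heq : -((t - x) / σ t ^ 2 - (t - x) / M ^ 2)
            = (x - t) * (1 / σ t ^ 2 - 1 / M ^ 2) := by ring
        rw [heq]
        exact mul_nonneg (by linarith [ht.2]) (hfac t htab)
      rw [intervalIntegral.integral_neg] at hnn
      rw [hsymm]
      linarith
  -- setup for dominated convergence
  set c : ℕ → ℝ := fun n => Real.sqrt n with hc_def
  have hsqtop : Tendsto c atTop atTop := by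
    rw [tendsto_atTop_atTop]
    intro C
    refine ⟨⌈C ^ 2⌉₊, fun n hn => ?_⟩
    have h1 : (C ^ 2 : ℝ) ≤ n := le_trans (Nat.le_ceil _) (Nat.cast_le.mpr hn)
    calc C ≤ |C| := le_abs_self C
      _ = Real.sqrt (C ^ 2) := (Real.sqrt_sq_eq_abs C).symm
      _ ≤ c n := Real.sqrt_le_sqrt h1
  set F : ℕ → ℝ → ℝ := fun n v =>
    Real.exp (-(n : ℝ) * D x (x + v / c n)) / σ (x + v / c n) with hF_def
  set S : ℕ → Set ℝ := fun n => Set.Ioc (c n * (a - x)) (c n * (b - x)) with hS_def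
  set g : ℕ → ℝ → ℝ := fun n v => (S n).indicator (F n) v with hg_def
  have hSmeas : ∀ n : ℕ, MeasurableSet (S n) := fun n => measurableSet_Ioc
  have hcpos : ∀ n : ℕ, ∀ v ∈ S n, 0 < c n := by
    intro n v hv
    rcases (Real.sqrt_nonneg (n : ℝ)).lt_or_eq with h | h
    · exact h
    · exfalso
      have hc0 : c n = 0 := h.symm
      have h1 := hv.1
      have h2 := hv.2
      rw [hc0] at h1 h2
      simp only [zero_mul] at h1 h2
      linarith
  have hmap : ∀ n : ℕ, ∀ v ∈ S n, x + v / c n ∈ Set.Icc a b := by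
    intro n v hv
    have h0 : 0 < c n := hcpos n v hv
    constructor
    · have h1 : a - x < v / c n := (lt_div_iff₀ h0).mpr (by rw [mul_comm]; exact hv.1)
      linarith
    · have h2 : v / c n ≤ b - x := (div_le_iff₀ h0).mpr (by rw [mul_comm]; exact hv.2)
      linarith
  have hDcont : ContinuousOn (D x) (Set.Icc a b) := by
    have h1 : IntervalIntegrable (fun t => (t - x) / σ t ^ 2) volume a b := by
      apply ContinuousOn.intervalIntegrable
      rwa [Set.uIcc_of_le hab.le]
    have h2 := intervalIntegral.continuousOn_primitive_interval' h1
      (by rw [Set.uIcc_of_le hab.le]; exact hxI)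
    rw [Set.uIcc_of_le hab.le] at h2
    exact h2.congr (fun μ _ => hD x μ)
  have hgmeas : ∀ n : ℕ, AEStronglyMeasurable (g n) volume := by
    intro n
    apply (aestronglyMeasurable_indicator_iff (hSmeas n)).mpr
    apply ContinuousOn.aestronglyMeasurable ?_ (hSmeas n)
    have hl : Continuous (fun v : ℝ => x + v / c n) :=
      continuous_const.add (continuous_id.div_const _)
    have hm : Set.MapsTo (fun v : ℝ => x + v / c n) (S n) (Set.Icc a b) := hmap n
    apply ContinuousOn.div
    · exact Real.continuous_exp.comp_continuousOn
        (continuousOn_const.mul ((hDcont.comp hl.continuousOn hm)))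
    · exact hσcont.comp hl.continuousOn hm
    · exact fun v hv => (hσpos _ (hmap n v hv)).ne'
  set bound : ℝ → ℝ := fun v => Real.exp (-(v ^ 2 / (2 * M ^ 2))) / m with hbd_def
  have hboundint : Integrable bound := by
    have heq : bound = fun v => Real.exp (-(1 / (2 * M ^ 2)) * v ^ 2) / m := by
      funext v
      rw [hbd_def]
      ring_nf
    rw [heq]
    exact (integrable_exp_neg_mul_sq (by positivity)).div_const m
  have hgbound : ∀ n : ℕ, ∀ᵐ v : ℝ, ‖g n v‖ ≤ bound v := by
    intro n
    refine .of_forall fun v => ?_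
    by_cases hv : v ∈ S n
    · have h0 : 0 < c n := hcpos n v hv
      have hμI := hmap n v hv
      have hn0 : (0 : ℝ) < n := Real.sqrt_pos.mp h0
      have hσv : 0 < σ (x + v / c n) := hσpos _ hμI
      have hcn2 : c n ^ 2 = (n : ℝ) := Real.sq_sqrt (Nat.cast_nonneg n)
      have hDl := hDlow _ hμI
      have hxv : x + v / c n - x = v / c n := by ring
      rw [hxv] at hDl
      have hvc : (v / c n) ^ 2 = v ^ 2 / (n : ℝ) := by rw [div_pow, hcn2]
      have hnd : v ^ 2 / (2 * M ^ 2) ≤ (n : ℝ) * D x (x + v / c n) := by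
        have h1 : (n : ℝ) * ((v / c n) ^ 2 / (2 * M ^ 2)) = v ^ 2 / (2 * M ^ 2) := by
          rw [hvc]
          field_simp
        calc v ^ 2 / (2 * M ^ 2) = (n : ℝ) * ((v / c n) ^ 2 / (2 * M ^ 2)) := h1.symm
          _ ≤ (n : ℝ) * D x (x + v / c n) := mul_le_mul_of_nonneg_left hDl hn0.le
      have hexp : Real.exp (-(n : ℝ) * D x (x + v / c n))
          ≤ Real.exp (-(v ^ 2 / (2 * M ^ 2))) := by
        apply Real.exp_le_exp.mpr
        rw [neg_mul]
        exact neg_le_neg hnd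
      have hgv : g n v = F n v := Set.indicator_of_mem hv (F n)
      rw [hgv, Real.norm_eq_abs,
        abs_of_nonneg (div_nonneg (Real.exp_nonneg _) hσv.le)]
      exact div_le_div₀ (Real.exp_nonneg _) hexp hm0 (hmle _ hμI)
    · have hgv : g n v = 0 := Set.indicator_of_notMem hv (F n)
      rw [hgv, norm_zero]
      positivity
  have hglim : ∀ᵐ v : ℝ,
      Tendsto (fun n => g n v) atTop (𝓝 (Real.exp (-(v ^ 2 / (2 * s ^ 2))) / s)) := by
    refine .of_forall fun v => ?_
    have hlo : Tendsto (fun n => c n * (a - x)) atTop atBot :=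
      hsqtop.atTop_mul_const_of_neg (by linarith)
    have hhi : Tendsto (fun n => c n * (b - x)) atTop atTop :=
      hsqtop.atTop_mul_const (by linarith)
    have hev : ∀ᶠ n in atTop, v ∈ S n := by
      filter_upwards [hlo.eventually_le_atBot (v - 1), hhi.eventually_ge_atTop v] with n h1 h2
      exact ⟨by linarith, h2⟩
    have hinv : Tendsto (fun n => v / c n) atTop (𝓝 0) := by
      have h1 : Tendsto (fun n => (c n)⁻¹) atTop (𝓝 0) := hsqtop.inv_tendsto_atTop
      have h2 := h1.const_mul v
      rw [mul_zero] at h2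
      simpa only [div_eq_mul_inv] using h2
    have hμlim : Tendsto (fun n => x + v / c n) atTop (𝓝 x) := by
      have h3 := (tendsto_const_nhds (x := x) (f := atTop (α := ℕ))).add hinv
      rwa [add_zero] at h3
    have hσlim : Tendsto (fun n => σ (x + v / c n)) atTop (𝓝 s) :=
      (hσcont.continuousAt (Icc_mem_nhds hax hxb)).tendsto.comp hμlim
    have hTlim : Tendsto (fun n : ℕ => (n : ℝ) * D x (x + v / c n)) atTop
        (𝓝 (v ^ 2 / (2 * s ^ 2))) := by
      rw [Metric.tendsto_atTop]
      intro ε hε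
      have hε' : 0 < ε / (2 * (v ^ 2 + 1)) := by positivity
      obtain ⟨δ, hδ, hδp⟩ := happrox _ hε'
      obtain ⟨N, hN⟩ := eventually_atTop.mp (hsqtop.eventually_ge_atTop (max (|v| / δ) 1))
      refine ⟨N, fun n hn => ?_⟩
      have h1 := hN n hn
      have h0 : 0 < c n := lt_of_lt_of_le one_pos ((le_max_right _ _).trans h1)
      have hn0 : (0 : ℝ) < n := Real.sqrt_pos.mp h0
      have hcn2 : c n ^ 2 = (n : ℝ) := Real.sq_sqrt (Nat.cast_nonneg n)
      have hvd : |v / c n| ≤ δ := by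
        rw [abs_div, abs_of_pos h0, div_le_iff₀ h0]
        have h2 : |v| / δ ≤ c n := (le_max_left _ _).trans h1
        calc |v| = |v| / δ * δ := by field_simp
          _ ≤ c n * δ := by
            apply mul_le_mul_of_nonneg_right h2 hδ.le
          _ = δ * c n := mul_comm _ _
      have hμx : |x + v / c n - x| ≤ δ := by
        rw [show x + v / c n - x = v / c n by ring]
        exact hvd
      obtain ⟨hμI', happ⟩ := hδp _ hμx
      have hvc : (x + v / c n - x) ^ 2 = v ^ 2 / (n : ℝ) := by
        rw [show x + v / c n - x = v / c n by ring, div_pow, hcn2]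
      have e1 : (n : ℝ) * ((x + v / c n - x) ^ 2 / (2 * s ^ 2)) = v ^ 2 / (2 * s ^ 2) := by
        rw [hvc]; field_simp; try ring
      have e2 : (n : ℝ) * (x + v / c n - x) ^ 2 = v ^ 2 := by
        rw [hvc]; field_simp; try ring
      rw [Real.dist_eq]
      calc |(n : ℝ) * D x (x + v / c n) - v ^ 2 / (2 * s ^ 2)|
          = (n : ℝ) * |D x (x + v / c n) - (x + v / c n - x) ^ 2 / (2 * s ^ 2)| := by
            rw [← e1, ← mul_sub, abs_mul, abs_of_nonneg hn0.le]
        _ ≤ (n : ℝ) * (ε / (2 * (v ^ 2 + 1)) * (x + v / c n - x) ^ 2) :=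
            mul_le_mul_of_nonneg_left happ hn0.le
        _ = ε / (2 * (v ^ 2 + 1)) * ((n : ℝ) * (x + v / c n - x) ^ 2) := by ring
        _ = ε / (2 * (v ^ 2 + 1)) * v ^ 2 := by rw [e2]
        _ < ε := by
            rw [div_mul_eq_mul_div, div_lt_iff₀ (by positivity)]
            nlinarith
    have hexplim : Tendsto (fun n : ℕ => Real.exp (-(n : ℝ) * D x (x + v / c n))) atTop
        (𝓝 (Real.exp (-(v ^ 2 / (2 * s ^ 2))))) := by
      have h1 : Tendsto (fun n : ℕ => -((n : ℝ) * D x (x + v / c n))) atTop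
          (𝓝 (-(v ^ 2 / (2 * s ^ 2)))) := hTlim.neg
      have h2 := (Real.continuous_exp.tendsto _).comp h1
      simpa only [Function.comp_def, neg_mul] using h2
    have hFlim : Tendsto (fun n => F n v) atTop
        (𝓝 (Real.exp (-(v ^ 2 / (2 * s ^ 2))) / s)) := hexplim.div hσlim hs0.ne'
    apply hFlim.congr'
    filter_upwards [hev] with n hn
    exact (Set.indicator_of_mem hn (F n)).symm
  have hDCT := MeasureTheory.tendsto_integral_of_dominated_convergence
    bound hgmeas hboundint hgbound hglim
  have hlimval : (∫ v : ℝ, Real.exp (-(v ^ 2 / (2 * s ^ 2))) / s) = Real.sqrt (2 * π) := by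
    have h1 : (fun v : ℝ => Real.exp (-(v ^ 2 / (2 * s ^ 2))) / s)
        = fun v : ℝ => Real.exp (-(1 / (2 * s ^ 2)) * v ^ 2) / s := by
      funext v; ring_nf
    rw [h1, MeasureTheory.integral_div, integral_gaussian]
    rw [show π / (1 / (2 * s ^ 2)) = 2 * π * s ^ 2 by field_simp]
    rw [Real.sqrt_mul (by positivity) (s ^ 2), Real.sqrt_sq hs0.le]
    field_simp
  have hsqrt2π : (0 : ℝ) < Real.sqrt (2 * π) := Real.sqrt_pos.mpr (by positivity)
  have hfinal : Tendsto (fun n => (Real.sqrt (2 * π))⁻¹ * ∫ v, g n v) atTop (𝓝 1) := by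
    have h2 := hDCT.const_mul (Real.sqrt (2 * π))⁻¹
    rw [hlimval, inv_mul_cancel₀ hsqrt2π.ne'] at h2
    exact h2
  apply Filter.Tendsto.congr' ?_ hfinal
  filter_upwards [eventually_ge_atTop 1] with n hn
  have h0 : 0 < c n := Real.sqrt_pos.mpr (by exact_mod_cast hn)
  have hle : c n * (a - x) ≤ c n * (b - x) :=
    mul_le_mul_of_nonneg_left (by linarith) h0.le
  -- substitution
  have hsub : (∫ v in (c n * (a - x))..(c n * (b - x)), F n v)
      = c n • ∫ μ in a..b, Real.exp (-(n : ℝ) * D x μ) / σ μ := by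
    have h := intervalIntegral.integral_comp_add_mul
      (f := fun μ => Real.exp (-(n : ℝ) * D x μ) / σ μ)
      (a := c n * (a - x)) (b := c n * (b - x)) (c := (c n)⁻¹) (inv_ne_zero h0.ne') x
    rw [inv_inv] at h
    rw [show x + (c n)⁻¹ * (c n * (a - x)) = a by field_simp; ring,
        show x + (c n)⁻¹ * (c n * (b - x)) = b by field_simp; ring] at h
    rw [← h]
    apply intervalIntegral.integral_congr
    intro v _
    simp only [hF_def]
    rw [div_eq_inv_mul v (c n)]
  have hIoc : (∫ v in (c n * (a - x))..(c n * (b - x)), F n v) = ∫ v, g n v := by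
    rw [intervalIntegral.integral_of_le hle, ← MeasureTheory.integral_indicator (hSmeas n)]
  have hABint : (∫ μ in a..b, Real.exp (-(n : ℝ) * D x μ) / σ μ)
      = (c n)⁻¹ * ∫ v, g n v := by
    rw [← hIoc, hsub, smul_eq_mul]
    field_simp
  rw [hABint]
  have hsqdiv : Real.sqrt ((n : ℝ) / (2 * π)) = c n / Real.sqrt (2 * π) :=
    Real.sqrt_div (Nat.cast_nonneg n) _
  rw [hsqdiv]
  field_simp
end

section
/- Let a < b be reals, let σ : [a,b] → (0,∞) be continuous, and define D(x, μ) = ∫_x^μ (t − x)/σ(t)² dt for x, μ ∈ [a,b]. Then for every x in the open interval (a,b), lim_{n→∞} √(n/(2π)) · ∫_x^b exp(−n·D(x, μ))/σ(μ) dμ = 1/2. -/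
open MeasureTheory Real Filter Topology intervalIntegral Set

section LaplaceAux

lemma gauss_tail_le {α δ : ℝ} (hα : 0 < α) (hδ : 0 < δ) :
    ∫ s in Ioi δ, Real.exp (-α * s ^ 2) ≤
      Real.exp (-(α * δ ^ 2 / 2)) * (Real.sqrt (π / (α / 2)) / 2) := by
  have h2 : (0:ℝ) < α / 2 := by linarith
  have hint : IntegrableOn (fun s : ℝ => Real.exp (-(α/2) * s ^ 2)) (Ioi δ) :=
    (integrable_exp_neg_mul_sq h2).integrableOn
  have step1 : ∫ s in Ioi δ, Real.exp (-α * s ^ 2) ≤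
      ∫ s in Ioi δ, Real.exp (-(α * δ ^ 2 / 2)) * Real.exp (-(α/2) * s ^ 2) := by
    refine setIntegral_mono_on ((integrable_exp_neg_mul_sq hα).integrableOn)
      (hint.const_mul _) measurableSet_Ioi ?_
    intro s hs
    rw [← Real.exp_add]
    apply Real.exp_le_exp.2
    have : δ ^ 2 ≤ s ^ 2 := by nlinarith [mem_Ioi.1 hs]
    nlinarith
  have step2 : ∫ s in Ioi δ, Real.exp (-(α * δ ^ 2 / 2)) * Real.exp (-(α/2) * s ^ 2)
      = Real.exp (-(α * δ ^ 2 / 2)) * ∫ s in Ioi δ, Real.exp (-(α/2) * s ^ 2) := by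
    rw [MeasureTheory.integral_const_mul]
  have step3 : ∫ s in Ioi δ, Real.exp (-(α/2) * s ^ 2) ≤ Real.sqrt (π / (α/2)) / 2 := by
    rw [← integral_gaussian_Ioi (α/2)]
    apply setIntegral_mono_set ((integrable_exp_neg_mul_sq h2).integrableOn)
    · filter_upwards with s using (Real.exp_pos _).le
    · exact HasSubset.Subset.eventuallyLE (Ioi_subset_Ioi hδ.le)
  calc ∫ s in Ioi δ, Real.exp (-α * s ^ 2) ≤ _ := step1
    _ = _ := step2
    _ ≤ _ := by
        apply mul_le_mul_of_nonneg_left step3 (Real.exp_pos _).le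

lemma gaussA {c δ : ℝ} (hc : 0 < c) (hδ : 0 < δ) :
    Tendsto (fun n : ℕ => Real.sqrt (n / (2*π)) *
        ∫ s in (0:ℝ)..δ, Real.exp (-((n:ℝ) * c * s ^ 2 / 2))) atTop
      (𝓝 (1 / (2 * Real.sqrt c))) := by
  set E : ℕ → ℝ := fun n =>
    Real.sqrt (n / (2*π)) * ∫ s in Ioi δ, Real.exp (-((n:ℝ)*c/2) * s ^ 2) with hE
  have key : ∀ n : ℕ, 1 ≤ n →
      Real.sqrt (n / (2*π)) * (∫ s in (0:ℝ)..δ, Real.exp (-((n:ℝ) * c * s ^ 2 / 2)))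
        = 1 / (2 * Real.sqrt c) - E n := by
    intro n hn
    have hn0 : (0:ℝ) < n := by exact_mod_cast hn
    set α : ℝ := (n:ℝ) * c / 2 with hα
    have hαpos : 0 < α := by positivity
    have hre : (fun s : ℝ => Real.exp (-((n:ℝ) * c * s ^ 2 / 2)))
        = fun s => Real.exp (-α * s ^ 2) := by
      funext s; congr 1; rw [hα]; ring
    have hsplit : (∫ s in (0:ℝ)..δ, Real.exp (-α * s ^ 2))
        = (∫ s in Ioi (0:ℝ), Real.exp (-α * s ^ 2)) - ∫ s in Ioi δ, Real.exp (-α * s ^ 2) := by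
      rw [intervalIntegral.integral_of_le hδ.le, eq_sub_iff_add_eq,
        ← setIntegral_union (Set.Ioc_disjoint_Ioi le_rfl) measurableSet_Ioi
          ((integrable_exp_neg_mul_sq hαpos).integrableOn)
          ((integrable_exp_neg_mul_sq hαpos).integrableOn),
        Set.Ioc_union_Ioi_eq_Ioi hδ.le]
    have hgauss : (∫ s in Ioi (0:ℝ), Real.exp (-α * s ^ 2)) = Real.sqrt (π / α) / 2 :=
      integral_gaussian_Ioi α
    have hval : Real.sqrt ((n:ℝ) / (2*π)) * (Real.sqrt (π / α) / 2) = 1 / (2 * Real.sqrt c) := by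
      have h1 : Real.sqrt ((n:ℝ)/(2*π)) * Real.sqrt (π / α) = Real.sqrt (((n:ℝ)/(2*π)) * (π/α)) :=
        (Real.sqrt_mul (by positivity) _).symm
      have h2 : ((n:ℝ)/(2*π)) * (π/α) = 1/c := by
        rw [hα]; field_simp
      rw [eq_div_iff (by positivity : (2:ℝ) * Real.sqrt c ≠ 0)]
      calc Real.sqrt ((n:ℝ)/(2*π)) * (Real.sqrt (π / α) / 2) * (2 * Real.sqrt c)
          = Real.sqrt ((n:ℝ)/(2*π)) * Real.sqrt (π / α) * Real.sqrt c := by ring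
        _ = Real.sqrt (((n:ℝ)/(2*π)) * (π/α)) * Real.sqrt c := by rw [h1]
        _ = Real.sqrt (1/c) * Real.sqrt c := by rw [h2]
        _ = Real.sqrt ((1/c) * c) := (Real.sqrt_mul (by positivity) _).symm
        _ = 1 := by rw [one_div, inv_mul_cancel₀ hc.ne', Real.sqrt_one]
    rw [hre, hsplit, hgauss, mul_sub, hval, hE]
  have hEbound : ∀ n : ℕ, 1 ≤ n →
      E n ≤ (Real.sqrt (2 / c) / 2) * Real.exp (-((n:ℝ) * (c * δ ^ 2 / 4))) := by
    intro n hn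
    have hn0 : (0:ℝ) < n := by exact_mod_cast hn
    set α : ℝ := (n:ℝ) * c / 2 with hα
    have hαpos : 0 < α := by positivity
    have h1 := gauss_tail_le hαpos hδ
    have h2 : E n ≤ Real.sqrt ((n:ℝ)/(2*π)) *
        (Real.exp (-(α * δ ^ 2 / 2)) * (Real.sqrt (π / (α/2)) / 2)) :=
      mul_le_mul_of_nonneg_left h1 (Real.sqrt_nonneg _)
    refine h2.trans (le_of_eq ?_)
    have hv : Real.sqrt ((n:ℝ)/(2*π)) * (Real.sqrt (π / (α/2)) / 2) = Real.sqrt (2/c) / 2 := by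
      have harg : (n:ℝ)/(2*π) * (π/(α/2)) = 2/c := by rw [hα]; field_simp
      calc Real.sqrt ((n:ℝ)/(2*π)) * (Real.sqrt (π / (α/2)) / 2)
          = (Real.sqrt ((n:ℝ)/(2*π)) * Real.sqrt (π / (α/2))) / 2 := by ring
        _ = Real.sqrt ((n:ℝ)/(2*π) * (π/(α/2))) / 2 := by
            rw [← Real.sqrt_mul (by positivity : (0:ℝ) ≤ (n:ℝ)/(2*π))]
        _ = Real.sqrt (2/c) / 2 := by rw [harg]
    have hexp : Real.exp (-(α * δ ^ 2 / 2)) = Real.exp (-((n:ℝ) * (c * δ ^ 2 / 4))) := by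
      congr 1; rw [hα]; ring
    calc Real.sqrt ((n:ℝ)/(2*π)) * (Real.exp (-(α * δ ^ 2 / 2)) * (Real.sqrt (π / (α/2)) / 2))
        = (Real.sqrt ((n:ℝ)/(2*π)) * (Real.sqrt (π / (α/2)) / 2)) * Real.exp (-(α * δ ^ 2 / 2)) := by
          ring
      _ = (Real.sqrt (2/c)/2) * Real.exp (-((n:ℝ) * (c * δ ^ 2 / 4))) := by rw [hv, hexp]
  have hEnonneg : ∀ n : ℕ, 0 ≤ E n := by
    intro n
    apply mul_nonneg (Real.sqrt_nonneg _)
    apply setIntegral_nonneg measurableSet_Ioi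
    intro s _; exact (Real.exp_pos _).le
  have hd : (0:ℝ) < c * δ ^ 2 / 4 := by positivity
  have hbound0 : Tendsto (fun n : ℕ =>
      (Real.sqrt (2 / c) / 2) * Real.exp (-((n:ℝ) * (c * δ ^ 2 / 4)))) atTop (𝓝 0) := by
    rw [show (0:ℝ) = (Real.sqrt (2/c)/2) * 0 by ring]
    apply Tendsto.const_mul
    apply Real.tendsto_exp_atBot.comp
    apply Filter.tendsto_neg_atBot_iff.mpr
    exact Tendsto.atTop_mul_const hd tendsto_natCast_atTop_atTop
  have hE0 : Tendsto E atTop (𝓝 0) := by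
    apply tendsto_of_tendsto_of_tendsto_of_le_of_le' tendsto_const_nhds hbound0
    · filter_upwards with n using hEnonneg n
    · filter_upwards [eventually_ge_atTop 1] with n hn using hEbound n hn
  have : Tendsto (fun n : ℕ => 1 / (2 * Real.sqrt c) - E n) atTop (𝓝 (1 / (2 * Real.sqrt c))) := by
    simpa using (tendsto_const_nhds.sub hE0)
  apply this.congr'
  filter_upwards [eventually_ge_atTop 1] with n hn
  exact (key n hn).symm

end LaplaceAux

set_option maxHeartbeats 2000000 in
/-- One-sided Laplace approximation at an interior point: for continuous
`σ : [a,b] → (0,∞)` and `D(x, μ) = ∫_x^μ (t − x)/σ(t)² dt`, for every `x ∈ (a,b)`,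
`√(n/(2π)) · ∫_x^b exp(−n·D(x, μ))/σ(μ) dμ → 1/2` as `n → ∞`. -/
theorem laplace_onesided_limit (a b : ℝ) (hab : a < b)
    (σ : ℝ → ℝ) (hσcont : ContinuousOn σ (Set.Icc a b))
    (hσpos : ∀ t ∈ Set.Icc a b, 0 < σ t)
    (D : ℝ → ℝ → ℝ) (hD : ∀ x μ, D x μ = ∫ t in x..μ, (t - x) / (σ t) ^ 2) :
    ∀ x ∈ Set.Ioo a b,
      Tendsto
        (fun n : ℕ =>
          Real.sqrt (n / (2 * Real.pi)) *
            ∫ μ in x..b, Real.exp (-(n : ℝ) * D x μ) / σ μ)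
        atTop (𝓝 (1 / 2)) := by
  intro x hx
  obtain ⟨hax, hxb⟩ := hx
  have hxI : x ∈ Set.Icc a b := ⟨hax.le, hxb.le⟩
  have hσx : 0 < σ x := hσpos x hxI
  -- minimum of σ
  obtain ⟨tmin, htminI, hmin⟩ :=
    isCompact_Icc.exists_isMinOn (Set.nonempty_Icc.2 hab.le) hσcont
  have hσtmin : 0 < σ tmin := hσpos tmin htminI
  set M : ℝ := 1 / σ tmin with hM
  have hMpos : 0 < M := by rw [hM]; positivity
  clear_value M
  -- the kernel f
  have hfcont : ContinuousOn (fun t => (t - x) / σ t ^ 2) (Set.Icc a b) := by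
    apply ContinuousOn.div (by fun_prop) (hσcont.pow 2)
    intro t ht; exact pow_ne_zero 2 (hσpos t ht).ne'
  have hDxfun : D x = fun μ => ∫ t in x..μ, (t - x) / σ t ^ 2 := funext fun μ => hD x μ
  have hIccsub : Set.Icc x b ⊆ Set.Icc a b := Set.Icc_subset_Icc hax.le le_rfl
  have hfi : IntegrableOn (fun t => (t - x) / σ t ^ 2) (Set.Icc x b) := (hfcont.mono hIccsub).integrableOn_Icc
  have hDcont : ContinuousOn (D x) (Set.Icc x b) := by
    rw [hDxfun]
    have := intervalIntegral.continuousOn_primitive_interval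
      (μ := volume) (a := x) (b := b) (f := fun t => (t - x) / σ t ^ 2)
      (by rwa [Set.uIcc_of_le hxb.le])
    rwa [Set.uIcc_of_le hxb.le] at this
  have hgcont : ∀ n : ℕ, ContinuousOn
      (fun μ => Real.exp (-(n : ℝ) * D x μ) / σ μ) (Set.Icc x b) := by
    intro n
    apply ContinuousOn.div
    · exact Real.continuous_exp.comp_continuousOn (continuousOn_const.mul hDcont)
    · exact hσcont.mono hIccsub
    · intro t ht; exact (hσpos t (hIccsub ht)).ne'
  -- start the epsilon argument
  rw [Metric.tendsto_nhds]
  intro ε' hε'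
  set ε : ℝ := min (ε' / 4) (1 / 4) with hεdef
  have hεpos : 0 < ε := lt_min (by linarith) (by norm_num)
  have hεle : ε ≤ 1 / 4 := min_le_right _ _
  have hεle' : ε ≤ ε' / 4 := min_le_left _ _
  clear_value ε
  -- choose delta from continuity of σ at x
  obtain ⟨δ₀, hδ₀pos, hδ₀⟩ := Metric.continuousWithinAt_iff.1 (hσcont x hxI) (ε * σ x)
    (by positivity)
  set δ : ℝ := min (δ₀ / 2) (b - x) with hδdef
  have hδpos : 0 < δ := lt_min (by linarith) (by linarith)
  have hxδb : x + δ ≤ b := by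
    have := min_le_right (δ₀ / 2) (b - x); rw [← hδdef] at this; linarith
  have hδle : δ ≤ δ₀ / 2 := hδdef ▸ min_le_left _ _
  clear_value δ
  have hIccδsub : Set.Icc x (x + δ) ⊆ Set.Icc a b := by
    intro t ht; exact ⟨by linarith [ht.1], by linarith [ht.2]⟩
  set p : ℝ := (1 - ε) * σ x with hp
  set q : ℝ := (1 + ε) * σ x with hq
  have hppos : 0 < p := by
    have : (0:ℝ) < 1 - ε := by linarith
    positivity
  have hqpos : 0 < q := by
    have : (0:ℝ) < 1 + ε := by linarith
    positivity
  clear_value p q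
  have hσbound : ∀ t ∈ Set.Icc x (x + δ), p ≤ σ t ∧ σ t ≤ q := by
    intro t ht
    have htI : t ∈ Set.Icc a b := hIccδsub ht
    have hdist : dist t x < δ₀ := by
      rw [Real.dist_eq, abs_of_nonneg (by linarith [ht.1])]
      have h1 : t - x ≤ δ := by linarith [ht.2]
      linarith [hδle]
    have := hδ₀ htI hdist
    rw [Real.dist_eq, abs_sub_lt_iff] at this
    constructor
    · rw [hp]; nlinarith [this.1, this.2]
    · rw [hq]; nlinarith [this.1, this.2]
  set cp : ℝ := (1 / p) ^ 2 with hcp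
  set cq : ℝ := (1 / q) ^ 2 with hcq
  have hcppos : 0 < cp := hcp ▸ pow_pos (one_div_pos.2 hppos) 2
  have hcqpos : 0 < cq := hcq ▸ pow_pos (one_div_pos.2 hqpos) 2
  clear_value cp cq
  -- pointwise bounds on D
  have hDub : ∀ μ ∈ Set.Icc x (x + δ), D x μ ≤ cp * (μ - x) ^ 2 / 2 := by
    intro μ hμ
    have hxμ : x ≤ μ := hμ.1
    have hIμ : Set.Icc x μ ⊆ Set.Icc x (x + δ) := Set.Icc_subset_Icc le_rfl hμ.2
    have hquad : (∫ t in x..μ, cp * (t - x)) = cp * (μ - x) ^ 2 / 2 := by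
      rw [intervalIntegral.integral_const_mul]
      have hid : (∫ t in x..μ, (t - x)) = (μ - x) ^ 2 / 2 := by
        rw [intervalIntegral.integral_sub (Continuous.intervalIntegrable (by fun_prop) _ _)
          (intervalIntegrable_const), integral_id, intervalIntegral.integral_const]
        simp [smul_eq_mul]
        ring
      rw [hid]
      ring
    rw [hD x μ, ← hquad]
    apply intervalIntegral.integral_mono_on hxμ
    · exact ((hfcont.mono (fun t ht => hIccδsub (hIμ ht))).intervalIntegrable_of_Icc hxμ)
    · exact (Continuous.intervalIntegrable (by fun_prop) _ _)
    · intro t ht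
      have hσt := hσbound t (hIμ ht)
      have h1 : p ^ 2 ≤ σ t ^ 2 := by nlinarith [hσt.1, hppos]
      have h2 : (0:ℝ) < σ t ^ 2 := by nlinarith [hσt.1, hppos]
      have h3 : (1:ℝ) / σ t ^ 2 ≤ 1 / p ^ 2 := by
        apply one_div_le_one_div_of_le (pow_pos hppos 2) h1
      have ht1 : 0 ≤ t - x := by linarith [ht.1]
      calc (t - x) / σ t ^ 2 = (t - x) * (1 / σ t ^ 2) := by ring
        _ ≤ (t - x) * (1 / p ^ 2) := by
            apply mul_le_mul_of_nonneg_left h3 ht1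
        _ = cp * (t - x) := by rw [hcp]; ring
  have hDlb : ∀ μ ∈ Set.Icc x (x + δ), cq * (μ - x) ^ 2 / 2 ≤ D x μ := by
    intro μ hμ
    have hxμ : x ≤ μ := hμ.1
    have hIμ : Set.Icc x μ ⊆ Set.Icc x (x + δ) := Set.Icc_subset_Icc le_rfl hμ.2
    have hquad : (∫ t in x..μ, cq * (t - x)) = cq * (μ - x) ^ 2 / 2 := by
      rw [intervalIntegral.integral_const_mul]
      have hid : (∫ t in x..μ, (t - x)) = (μ - x) ^ 2 / 2 := by
        rw [intervalIntegral.integral_sub (Continuous.intervalIntegrable (by fun_prop) _ _)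
          (intervalIntegrable_const), integral_id, intervalIntegral.integral_const]
        simp [smul_eq_mul]
        ring
      rw [hid]
      ring
    rw [hD x μ, ← hquad]
    apply intervalIntegral.integral_mono_on hxμ
    · exact (Continuous.intervalIntegrable (by fun_prop) _ _)
    · exact ((hfcont.mono (fun t ht => hIccδsub (hIμ ht))).intervalIntegrable_of_Icc hxμ)
    · intro t ht
      have hσt := hσbound t (hIμ ht)
      have h1 : σ t ^ 2 ≤ q ^ 2 := by nlinarith [hσt.2, hσt.1, hppos]
      have h2 : (0:ℝ) < σ t ^ 2 := by nlinarith [hσt.1, hppos]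
      have h3 : (1:ℝ) / q ^ 2 ≤ 1 / σ t ^ 2 := one_div_le_one_div_of_le h2 h1
      have ht1 : 0 ≤ t - x := by linarith [ht.1]
      calc cq * (t - x) = (t - x) * (1 / q ^ 2) := by rw [hcq]; ring
        _ ≤ (t - x) * (1 / σ t ^ 2) := mul_le_mul_of_nonneg_left h3 ht1
        _ = (t - x) / σ t ^ 2 := by ring
  set m : ℝ := cq * δ ^ 2 / 2 with hm
  have hmpos : 0 < m := by
    have := mul_pos hcqpos (pow_pos hδpos 2)
    rw [hm]; linarith
  clear_value m
  have hDtail : ∀ μ ∈ Set.Icc (x + δ) b, m ≤ D x μ := by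
    intro μ hμ
    have h1 : m ≤ D x (x + δ) := by
      have := hDlb (x + δ) ⟨by linarith, le_rfl⟩
      simpa [hm] using this
    have h2 : D x (x + δ) ≤ D x μ := by
      rw [hD x (x + δ), hD x μ]
      have hint1 : IntervalIntegrable (fun t => (t - x) / σ t ^ 2) volume x (x + δ) :=
        (hfcont.mono (fun t ht => hIccδsub ht)).intervalIntegrable_of_Icc (by linarith)
      have hint2 : IntervalIntegrable (fun t => (t - x) / σ t ^ 2) volume (x + δ) μ := by
        apply ContinuousOn.intervalIntegrable_of_Icc hμ.1
        apply hfcont.mono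
        intro t ht
        exact ⟨by linarith [ht.1], by linarith [ht.2, hμ.2]⟩
      rw [← intervalIntegral.integral_add_adjacent_intervals hint1 hint2]
      have : 0 ≤ ∫ t in (x + δ)..μ, (t - x) / σ t ^ 2 := by
        apply intervalIntegral.integral_nonneg hμ.1
        intro t ht
        apply div_nonneg _ (sq_nonneg _)
        linarith [ht.1]
      linarith
    linarith
  -- the two pieces of the integral
  have hgint1 : ∀ n : ℕ, IntervalIntegrable
      (fun μ => Real.exp (-(n : ℝ) * D x μ) / σ μ) volume x (x + δ) := by
    intro n
    apply ContinuousOn.intervalIntegrable_of_Icc (by linarith)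
    exact (hgcont n).mono (Set.Icc_subset_Icc le_rfl hxδb)
  have hgint2 : ∀ n : ℕ, IntervalIntegrable
      (fun μ => Real.exp (-(n : ℝ) * D x μ) / σ μ) volume (x + δ) b := by
    intro n
    apply ContinuousOn.intervalIntegrable_of_Icc hxδb
    exact (hgcont n).mono (Set.Icc_subset_Icc (by linarith) le_rfl)
  have hIsplit : ∀ n : ℕ, (∫ μ in x..b, Real.exp (-(n : ℝ) * D x μ) / σ μ)
      = (∫ μ in x..(x + δ), Real.exp (-(n : ℝ) * D x μ) / σ μ)
        + ∫ μ in (x + δ)..b, Real.exp (-(n : ℝ) * D x μ) / σ μ :=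
    fun n => (intervalIntegral.integral_add_adjacent_intervals (hgint1 n) (hgint2 n)).symm
  -- gaussian comparison integrals, with change of variables
  have hshift : ∀ c : ℝ, (∫ μ in x..(x + δ), Real.exp (-(c * (μ - x) ^ 2 / 2)))
      = ∫ s in (0:ℝ)..δ, Real.exp (-(c * s ^ 2 / 2)) := by
    intro c
    have := intervalIntegral.integral_comp_sub_right
      (fun s => Real.exp (-(c * s ^ 2 / 2))) x (a := x) (b := x + δ)
    simpa using this
  -- bounds on the first piece
  have hJ1lb : ∀ n : ℕ, (1 / q) * ∫ s in (0:ℝ)..δ, Real.exp (-((n:ℝ) * cp * s ^ 2 / 2))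
      ≤ ∫ μ in x..(x + δ), Real.exp (-(n : ℝ) * D x μ) / σ μ := by
    intro n
    have hpt : ∀ μ ∈ Set.Icc x (x + δ),
        Real.exp (-((n:ℝ) * cp * (μ - x) ^ 2 / 2)) / q
          ≤ Real.exp (-(n : ℝ) * D x μ) / σ μ := by
      intro μ hμ
      have h1 : Real.exp (-((n:ℝ) * cp * (μ - x) ^ 2 / 2)) ≤ Real.exp (-(n : ℝ) * D x μ) := by
        apply Real.exp_le_exp.2
        have := hDub μ hμ
        nlinarith [Nat.cast_nonneg (α := ℝ) n]
      have h2 := hσbound μ hμ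
      exact div_le_div₀ (Real.exp_pos _).le h1 (hppos.trans_le h2.1) h2.2
    calc (1 / q) * ∫ s in (0:ℝ)..δ, Real.exp (-((n:ℝ) * cp * s ^ 2 / 2))
        = ∫ μ in x..(x + δ), Real.exp (-((n:ℝ) * cp * (μ - x) ^ 2 / 2)) / q := by
          rw [intervalIntegral.integral_div, hshift ((n:ℝ) * cp)]
          ring
      _ ≤ _ := by
          apply intervalIntegral.integral_mono_on (by linarith)
            ((Continuous.intervalIntegrable (by fun_prop) _ _)) (hgint1 n) hpt
  have hJ1ub : ∀ n : ℕ, (∫ μ in x..(x + δ), Real.exp (-(n : ℝ) * D x μ) / σ μ)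
      ≤ (1 / p) * ∫ s in (0:ℝ)..δ, Real.exp (-((n:ℝ) * cq * s ^ 2 / 2)) := by
    intro n
    have hpt : ∀ μ ∈ Set.Icc x (x + δ),
        Real.exp (-(n : ℝ) * D x μ) / σ μ
          ≤ Real.exp (-((n:ℝ) * cq * (μ - x) ^ 2 / 2)) / p := by
      intro μ hμ
      have h1 : Real.exp (-(n : ℝ) * D x μ) ≤ Real.exp (-((n:ℝ) * cq * (μ - x) ^ 2 / 2)) := by
        apply Real.exp_le_exp.2
        have := hDlb μ hμ
        nlinarith [Nat.cast_nonneg (α := ℝ) n]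
      have h2 := hσbound μ hμ
      exact div_le_div₀ (Real.exp_pos _).le h1 hppos h2.1
    calc (∫ μ in x..(x + δ), Real.exp (-(n : ℝ) * D x μ) / σ μ)
        ≤ ∫ μ in x..(x + δ), Real.exp (-((n:ℝ) * cq * (μ - x) ^ 2 / 2)) / p := by
          apply intervalIntegral.integral_mono_on (by linarith) (hgint1 n)
            ((Continuous.intervalIntegrable (by fun_prop) _ _)) hpt
      _ = (1 / p) * ∫ s in (0:ℝ)..δ, Real.exp (-((n:ℝ) * cq * s ^ 2 / 2)) := by
          rw [intervalIntegral.integral_div, hshift ((n:ℝ) * cq)]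
          ring
  -- bounds on the second piece
  have hJ2nonneg : ∀ n : ℕ, 0 ≤ ∫ μ in (x + δ)..b, Real.exp (-(n : ℝ) * D x μ) / σ μ := by
    intro n
    apply intervalIntegral.integral_nonneg hxδb
    intro μ hμ
    have : 0 < σ μ := hσpos μ ⟨by linarith [hμ.1], hμ.2⟩
    positivity
  have hJ2ub : ∀ n : ℕ, (∫ μ in (x + δ)..b, Real.exp (-(n : ℝ) * D x μ) / σ μ)
      ≤ (b - x) * (M * Real.exp (-((n:ℝ) * m))) := by
    intro n
    have hpt : ∀ μ ∈ Set.Icc (x + δ) b,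
        Real.exp (-(n : ℝ) * D x μ) / σ μ ≤ M * Real.exp (-((n:ℝ) * m)) := by
      intro μ hμ
      have hμI : μ ∈ Set.Icc a b := ⟨by linarith [hμ.1], hμ.2⟩
      have h1 : Real.exp (-(n : ℝ) * D x μ) ≤ Real.exp (-((n:ℝ) * m)) := by
        apply Real.exp_le_exp.2
        have := hDtail μ hμ
        nlinarith [Nat.cast_nonneg (α := ℝ) n]
      calc Real.exp (-(n : ℝ) * D x μ) / σ μ
          ≤ Real.exp (-((n:ℝ) * m)) / σ tmin :=
            div_le_div₀ (Real.exp_pos _).le h1 hσtmin (hmin hμI)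
        _ = M * Real.exp (-((n:ℝ) * m)) := by rw [hM]; ring
    calc (∫ μ in (x + δ)..b, Real.exp (-(n : ℝ) * D x μ) / σ μ)
        ≤ ∫ _ in (x + δ)..b, M * Real.exp (-((n:ℝ) * m)) := by
          apply intervalIntegral.integral_mono_on hxδb (hgint2 n)
            (intervalIntegrable_const) hpt
      _ = (b - (x + δ)) * (M * Real.exp (-((n:ℝ) * m))) := by
          rw [intervalIntegral.integral_const]; simp [smul_eq_mul]
      _ ≤ (b - x) * (M * Real.exp (-((n:ℝ) * m))) := by
          apply mul_le_mul_of_nonneg_right (by linarith)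
          exact mul_nonneg hMpos.le (Real.exp_pos _).le
  -- limits of bounding sequences
  have hsqp : Real.sqrt cp = 1 / p := by
    rw [hcp, Real.sqrt_sq (one_div_nonneg.2 hppos.le)]
  have hsqq : Real.sqrt cq = 1 / q := by
    rw [hcq, Real.sqrt_sq (one_div_nonneg.2 hqpos.le)]
  have hLlim : Tendsto (fun n : ℕ => (1 / q) * (Real.sqrt (n / (2 * π)) *
      ∫ s in (0:ℝ)..δ, Real.exp (-((n:ℝ) * cp * s ^ 2 / 2)))) atTop
      (𝓝 (p / (2 * q))) := by
    have := (gaussA hcppos hδpos).const_mul (1 / q)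
    convert this using 2
    rw [hsqp]
    field_simp [hppos.ne', hqpos.ne']
  have hUlim1 : Tendsto (fun n : ℕ => (1 / p) * (Real.sqrt (n / (2 * π)) *
      ∫ s in (0:ℝ)..δ, Real.exp (-((n:ℝ) * cq * s ^ 2 / 2)))) atTop
      (𝓝 (q / (2 * p))) := by
    have := (gaussA hcqpos hδpos).const_mul (1 / p)
    convert this using 2
    rw [hsqq]
    field_simp [hppos.ne', hqpos.ne']
  have hUlim2 : Tendsto (fun n : ℕ => Real.sqrt (n / (2 * π)) *
      ((b - x) * (M * Real.exp (-((n:ℝ) * m))))) atTop (𝓝 0) := by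
    have hub : ∀ n : ℕ, 1 ≤ n → Real.sqrt (n / (2 * π)) *
        ((b - x) * (M * Real.exp (-((n:ℝ) * m))))
        ≤ ((b - x) * M / m) * (((n:ℝ) * m) * Real.exp (-((n:ℝ) * m))) := by
      intro n hn
      have hn0 : (1:ℝ) ≤ (n:ℝ) := by exact_mod_cast hn
      have hsq : Real.sqrt ((n:ℝ) / (2 * π)) ≤ (n:ℝ) := by
        calc Real.sqrt ((n:ℝ) / (2 * π)) ≤ Real.sqrt ((n:ℝ) ^ 2) := by
              apply Real.sqrt_le_sqrt
              rw [div_le_iff₀ (by positivity)]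
              nlinarith [Real.pi_gt_three, hn0]
          _ = (n:ℝ) := Real.sqrt_sq (by linarith)
      calc Real.sqrt ((n:ℝ) / (2 * π)) * ((b - x) * (M * Real.exp (-((n:ℝ) * m))))
          ≤ (n:ℝ) * ((b - x) * (M * Real.exp (-((n:ℝ) * m)))) := by
            apply mul_le_mul_of_nonneg_right hsq
            apply mul_nonneg (by linarith)
            exact mul_nonneg hMpos.le (Real.exp_pos _).le
        _ = ((b - x) * M / m) * (((n:ℝ) * m) * Real.exp (-((n:ℝ) * m))) := by
            field_simp [hmpos.ne']
    have hcomp : Tendsto (fun n : ℕ => ((b - x) * M / m) *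
        (((n:ℝ) * m) * Real.exp (-((n:ℝ) * m)))) atTop (𝓝 0) := by
      rw [show (0:ℝ) = ((b - x) * M / m) * 0 by ring]
      apply Tendsto.const_mul
      have h1 : Tendsto (fun n : ℕ => (n:ℝ) * m) atTop atTop :=
        Tendsto.atTop_mul_const hmpos tendsto_natCast_atTop_atTop
      have h2 := (Real.tendsto_pow_mul_exp_neg_atTop_nhds_zero 1).comp h1
      simpa [Function.comp_def] using h2
    apply tendsto_of_tendsto_of_tendsto_of_le_of_le' tendsto_const_nhds hcomp
    · filter_upwards with n
      apply mul_nonneg (Real.sqrt_nonneg _)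
      apply mul_nonneg (by linarith)
      exact mul_nonneg hMpos.le (Real.exp_pos _).le
    · filter_upwards [eventually_ge_atTop 1] with n hn using hub n hn
  -- final combination
  have h_lb : 1 / 2 - 2 * ε < p / (2 * q) := by
    rw [lt_div_iff₀ (by linarith : (0:ℝ) < 2 * q)]
    rw [hp, hq]
    nlinarith [mul_pos hεpos hσx, mul_pos (mul_pos hεpos hεpos) hσx]
  have h_ub : q / (2 * p) < 1 / 2 + 3 * ε := by
    rw [div_lt_iff₀ (by linarith : (0:ℝ) < 2 * p)]
    rw [hp, hq]
    nlinarith [mul_pos hεpos hσx, mul_pos (mul_pos hεpos hεpos) hσx,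
      mul_le_mul_of_nonneg_right hεle (le_of_lt (mul_pos hεpos hσx))]
  have hev1 : ∀ᶠ n : ℕ in atTop, 1 / 2 - 2 * ε < (1 / q) * (Real.sqrt (n / (2 * π)) *
      ∫ s in (0:ℝ)..δ, Real.exp (-((n:ℝ) * cp * s ^ 2 / 2))) :=
    hLlim.eventually (eventually_gt_nhds h_lb)
  have hUlim : Tendsto (fun n : ℕ => (1 / p) * (Real.sqrt (n / (2 * π)) *
      ∫ s in (0:ℝ)..δ, Real.exp (-((n:ℝ) * cq * s ^ 2 / 2)))
      + Real.sqrt (n / (2 * π)) * ((b - x) * (M * Real.exp (-((n:ℝ) * m))))) atTop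
      (𝓝 (q / (2 * p))) := by
    simpa using hUlim1.add hUlim2
  have hev2 : ∀ᶠ n : ℕ in atTop, (1 / p) * (Real.sqrt (n / (2 * π)) *
      ∫ s in (0:ℝ)..δ, Real.exp (-((n:ℝ) * cq * s ^ 2 / 2)))
      + Real.sqrt (n / (2 * π)) * ((b - x) * (M * Real.exp (-((n:ℝ) * m)))) < 1 / 2 + 3 * ε :=
    hUlim.eventually (eventually_lt_nhds h_ub)
  filter_upwards [hev1, hev2] with n h1 h2
  have hsnn : (0:ℝ) ≤ Real.sqrt ((n:ℝ) / (2 * π)) := Real.sqrt_nonneg _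
  have hFlb : (1 / q) * (Real.sqrt ((n:ℝ) / (2 * π)) *
      ∫ s in (0:ℝ)..δ, Real.exp (-((n:ℝ) * cp * s ^ 2 / 2)))
      ≤ Real.sqrt ((n:ℝ) / (2 * π)) * ∫ μ in x..b, Real.exp (-(n : ℝ) * D x μ) / σ μ := by
    rw [hIsplit n, mul_add]
    have ha := mul_le_mul_of_nonneg_left (hJ1lb n) hsnn
    have hb' := mul_nonneg hsnn (hJ2nonneg n)
    have hc' : (1 / q) * (Real.sqrt ((n:ℝ) / (2 * π)) *
        ∫ s in (0:ℝ)..δ, Real.exp (-((n:ℝ) * cp * s ^ 2 / 2)))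
        = Real.sqrt ((n:ℝ) / (2 * π)) * ((1 / q) *
        ∫ s in (0:ℝ)..δ, Real.exp (-((n:ℝ) * cp * s ^ 2 / 2))) := by ring
    linarith
  have hFub : Real.sqrt ((n:ℝ) / (2 * π)) * (∫ μ in x..b, Real.exp (-(n : ℝ) * D x μ) / σ μ)
      ≤ (1 / p) * (Real.sqrt ((n:ℝ) / (2 * π)) *
      ∫ s in (0:ℝ)..δ, Real.exp (-((n:ℝ) * cq * s ^ 2 / 2)))
      + Real.sqrt ((n:ℝ) / (2 * π)) * ((b - x) * (M * Real.exp (-((n:ℝ) * m)))) := by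
    rw [hIsplit n, mul_add]
    have ha := mul_le_mul_of_nonneg_left (hJ1ub n) hsnn
    have hb' := mul_le_mul_of_nonneg_left (hJ2ub n) hsnn
    have hc' : (1 / p) * (Real.sqrt ((n:ℝ) / (2 * π)) *
        ∫ s in (0:ℝ)..δ, Real.exp (-((n:ℝ) * cq * s ^ 2 / 2)))
        = Real.sqrt ((n:ℝ) / (2 * π)) * ((1 / p) *
        ∫ s in (0:ℝ)..δ, Real.exp (-((n:ℝ) * cq * s ^ 2 / 2))) := by ring
    linarith
  rw [Real.dist_eq, abs_lt]
  constructor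
  · have : 1 / 2 - 2 * ε < Real.sqrt ((n:ℝ) / (2 * π)) *
        ∫ μ in x..b, Real.exp (-(n : ℝ) * D x μ) / σ μ := lt_of_lt_of_le h1 hFlb
    linarith [hεle']
  · have : Real.sqrt ((n:ℝ) / (2 * π)) *
        (∫ μ in x..b, Real.exp (-(n : ℝ) * D x μ) / σ μ) < 1 / 2 + 3 * ε :=
      lt_of_le_of_lt hFub h2
    linarith [hεle']
end

section
/- Let Γ be a nonempty set and p : Γ → ℝ → [0,∞) a family of measurable density functions. Fix integers 0 ≤ m < n. For x = (x₁,…,xₙ) ∈ ℝⁿ define the SNML conditional joint density S_p(x) = ∏_{t=m+1}^{n} [sup_{γ∈Γ} ∏_{i=1}^{t} p(γ, x_i)] / [∫_ℝ sup_{γ∈Γ} ((∏_{i=1}^{t−1} p(γ, x_i)) · p(γ, y)) dy], assuming each supremum is finite and each denominator is positive and finite. Let f : ℝ → ℝ be a bijection that is continuously differentiable with continuously differentiable inverse, and define q(γ, y) = p(γ, f⁻¹(y)) · |(f⁻¹)′(y)|. If for every such n, every x ∈ ℝⁿ, and every permutation π of {1,…,n} fixing 1,…,m pointwise one has S_p(x∘π)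 = S_p(x), then for every y ∈ ℝⁿ and every such permutation π one has S_q(y∘π) = S_q(y). Moreover S_q(y) = S_p(f⁻¹(y₁),…,f⁻¹(yₙ)) · ∏_{t=m+1}^{n} |(f⁻¹)′(y_t)|. -/
open MeasureTheory Real Finset

/-- The SNML conditional joint density of the (0-indexed) sequence `x 0, …, x (n-1)`,
conditioned on the initial segment `x 0, …, x (m-1)`:
`S_p(x) = ∏_{t=m}^{n-1} [sup_γ ∏_{i≤t} p γ (x i)] / [∫ sup_γ (∏_{i<t} p γ (x i)) · p γ y dy]`. -/
noncomputable def snmlJoint {Γ : Type*} (p : Γ → ℝ → ℝ) (m n : ℕ) (x : ℕ → ℝ) : ℝ :=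
  ∏ t ∈ Finset.Ico m n,
    (⨆ γ : Γ, ∏ i ∈ Finset.range (t + 1), p γ (x i)) /
      ∫ y : ℝ, ⨆ γ : Γ, (∏ i ∈ Finset.range t, p γ (x i)) * p γ y

/-- A smooth one-to-one transformation of the observation variable
preserves SNML exchangeability, and the transformed SNML density satisfies
`S_q(y) = S_p(f⁻¹(y₁),…,f⁻¹(yₙ)) · ∏_{t=m+1}^{n} |(f⁻¹)′(y_t)|`. -/
theorem snml_exchangeability_transport
    {Γ : Type*} [Nonempty Γ] (p : Γ → ℝ → ℝ)
    (hp_nonneg : ∀ γ x, 0 ≤ p γ x) (hp_meas : ∀ γ, Measurable (p γ))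
    (m n : ℕ) (hmn : m < n)
    -- regularity: each supremum is finite, each denominator positive and finite
    (hbdd : ∀ k : ℕ, ∀ x : ℕ → ℝ,
      BddAbove (Set.range fun γ : Γ => ∏ i ∈ Finset.range k, p γ (x i)))
    (hint : ∀ t : ℕ, ∀ x : ℕ → ℝ, t ∈ Finset.Ico m n →
      Integrable (fun y : ℝ => ⨆ γ : Γ, (∏ i ∈ Finset.range t, p γ (x i)) * p γ y))
    (hpos : ∀ t : ℕ, ∀ x : ℕ → ℝ, t ∈ Finset.Ico m n →
      0 < ∫ y : ℝ, ⨆ γ : Γ, (∏ i ∈ Finset.range t, p γ (x i)) * p γ y)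
    -- the transformation f and its inverse
    (f finv : ℝ → ℝ) (hf_bij : Function.Bijective f)
    (hfinv_left : Function.LeftInverse finv f)
    (hfinv_right : Function.RightInverse finv f)
    (hf_smooth : ContDiff ℝ 1 f) (hfinv_smooth : ContDiff ℝ 1 finv)
    -- the transformed family of densities
    (q : Γ → ℝ → ℝ) (hq : ∀ γ y, q γ y = p γ (finv y) * |deriv finv y|)
    -- SNML exchangeability of p
    (hExch : ∀ n' : ℕ, m < n' → ∀ x : ℕ → ℝ, ∀ e : Equiv.Perm ℕ,
      (∀ i, i < m → e i = i) → (∀ i, n' ≤ i → e i = i) →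
      snmlJoint p m n' (x ∘ e) = snmlJoint p m n' x) :
    (∀ y : ℕ → ℝ, ∀ e : Equiv.Perm ℕ,
      (∀ i, i < m → e i = i) → (∀ i, n ≤ i → e i = i) →
      snmlJoint q m n (y ∘ e) = snmlJoint q m n y) ∧
    (∀ y : ℕ → ℝ,
      snmlJoint q m n y =
        snmlJoint p m n (fun i => finv (y i)) *
          ∏ t ∈ Finset.Ico m n, |deriv finv (y t)|) := by
  -- the derivative of `finv` never vanishes
  have hdf : ∀ z : ℝ, deriv finv z ≠ 0 := by
    intro z hz
    have h1 : HasDerivAt (f ∘ finv) (deriv f (finv z) * deriv finv z) z :=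
      ((hf_smooth.differentiable one_ne_zero (finv z)).hasDerivAt).comp z
        ((hfinv_smooth.differentiable one_ne_zero z).hasDerivAt)
    have h2 : (f ∘ finv) = id := funext hfinv_right
    rw [h2] at h1
    have h3 := h1.unique (hasDerivAt_id z)
    rw [hz, mul_zero] at h3
    exact zero_ne_one h3
  have hdpos : ∀ z : ℝ, 0 < |deriv finv z| := fun z => abs_pos.mpr (hdf z)
  -- change of variables
  have hcov : ∀ g : ℝ → ℝ, (∫ z : ℝ, |deriv finv z| * g (finv z)) = ∫ u : ℝ, g u := by
    intro g
    have hinj : Set.InjOn finv Set.univ := fun a _ b _ h => by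
      have h' := congrArg f h
      rwa [hfinv_right, hfinv_right] at h'
    have hderiv : ∀ z ∈ Set.univ, HasDerivWithinAt finv (deriv finv z) Set.univ z :=
      fun z _ => ((hfinv_smooth.differentiable one_ne_zero z).hasDerivAt).hasDerivWithinAt
    have hsurj : finv '' Set.univ = Set.univ :=
      Set.eq_univ_of_forall fun u => ⟨f u, trivial, hfinv_left u⟩
    have h := MeasureTheory.integral_image_eq_integral_abs_deriv_smul
      MeasurableSet.univ hderiv hinj g
    rw [hsurj] at h
    simpa [smul_eq_mul, MeasureTheory.Measure.restrict_univ] using h.symm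
  -- the key transformation identity
  have key : ∀ y : ℕ → ℝ, snmlJoint q m n y =
      snmlJoint p m n (fun i => finv (y i)) * ∏ t ∈ Finset.Ico m n, |deriv finv (y t)| := by
    intro y
    unfold snmlJoint
    rw [← Finset.prod_mul_distrib]
    refine Finset.prod_congr rfl fun t ht => ?_
    set x : ℕ → ℝ := fun i => finv (y i) with hx
    set C : ℕ → ℝ := fun k => ∏ i ∈ Finset.range k, |deriv finv (y i)| with hC
    have hCpos : ∀ k, 0 < C k := fun k => Finset.prod_pos fun i _ => hdpos _
    -- numerator
    have hnum : (⨆ γ : Γ, ∏ i ∈ Finset.range (t + 1), q γ (y i))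
        = C (t + 1) * ⨆ γ : Γ, ∏ i ∈ Finset.range (t + 1), p γ (x i) := by
      rw [Real.mul_iSup_of_nonneg (le_of_lt (hCpos _))]
      refine iSup_congr fun γ => ?_
      simp only [hq, hx, hC]
      rw [Finset.prod_mul_distrib]
      ring
    -- denominator
    have hden_integrand : ∀ z : ℝ,
        (⨆ γ : Γ, (∏ i ∈ Finset.range t, q γ (y i)) * q γ z)
          = C t * (|deriv finv z| *
            ⨆ γ : Γ, (∏ i ∈ Finset.range t, p γ (x i)) * p γ (finv z)) := by
      intro z
      rw [Real.mul_iSup_of_nonneg (le_of_lt (hdpos z)),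
        Real.mul_iSup_of_nonneg (le_of_lt (hCpos t))]
      refine iSup_congr fun γ => ?_
      simp only [hq, hx, hC]
      rw [Finset.prod_mul_distrib]
      ring
    have hden : (∫ z : ℝ, ⨆ γ : Γ, (∏ i ∈ Finset.range t, q γ (y i)) * q γ z)
        = C t * ∫ u : ℝ, ⨆ γ : Γ, (∏ i ∈ Finset.range t, p γ (x i)) * p γ u := by
      simp_rw [hden_integrand]
      rw [MeasureTheory.integral_const_mul,
        hcov (fun u => ⨆ γ : Γ, (∏ i ∈ Finset.range t, p γ (x i)) * p γ u)]
    rw [hnum, hden]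
    have hDpos := hpos t x ht
    have hCt := (hCpos t).ne'
    have hsucc : C (t + 1) = C t * |deriv finv (y t)| := Finset.prod_range_succ _ t
    rw [hsucc]
    field_simp
  refine ⟨?_, key⟩
  intro y e he1 he2
  rw [key, key]
  have h1 : snmlJoint p m n (fun i => finv ((y ∘ e) i))
      = snmlJoint p m n (fun i => finv (y i)) := hExch n hmn (fun i => finv (y i)) e he1 he2
  rw [h1]
  congr 1
  have hfix : ∀ i, i ∉ Finset.Ico m n → e i = i := by
    intro i hi
    rw [Finset.mem_Ico, not_and_or, not_le, not_lt] at hi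
    rcases hi with h | h
    · exact he1 i h
    · exact he2 i h
  have hst : ∀ i, i ∈ Finset.Ico m n ↔ e i ∈ Finset.Ico m n := by
    intro i
    constructor
    · intro hi
      by_contra h
      have h' := hfix (e i) h
      have h'' := e.injective h'
      rw [h''] at h
      exact h hi
    · intro hi
      by_contra h
      rw [hfix i h] at hi
      exact h hi
  exact Finset.prod_equiv e hst fun i _ => rfl
end
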